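/- arXiv:math/9904170 — 7 statements merged into one kernel-verified Lean document; each statement's English description precedes it below -/
import Mathlib

section
/- Let g, h be smooth functions on Ω satisfying L_i g = λ^i L_i h for all i = 1,…,n. Then for all i ≠ j one has L_i L_j h = (L_j λ^i/(λ^j − λ^i)) L_i h + (L_i λ^j/(λ^i − λ^j)) L_j h + Σ_k c^k_{ij} ((λ^i − λ^k)/(λ^i − λ^j)) L_k h, where the sum is over all k = 1,…,n (the terms with k = i, j vanish or are interpreted via the stated fractions, which are well defined since λ^i ≠ λ^j pointwise). -/
/-- Directional derivative of `w` along the vector field `ξ i`. -/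
noncomputable def Lder {n : ℕ} {F : Type*} [NormedAddCommGroup F] [NormedSpace ℝ F]
    (ξ : Fin n → (Fin n → ℝ) → (Fin n → ℝ)) (i : Fin n)
    (w : (Fin n → ℝ) → F) : (Fin n → ℝ) → F :=
  fun p => fderiv ℝ w p (ξ i p)

lemma lder_contDiffAt {n : ℕ} {Ω : Set (Fin n → ℝ)} (hΩ : IsOpen Ω)
    {ξ : Fin n → (Fin n → ℝ) → (Fin n → ℝ)} (hξ : ∀ i, ContDiffOn ℝ (⊤ : ℕ∞) (ξ i) Ω)
    {w : (Fin n → ℝ) → ℝ} (hw : ContDiffOn ℝ (⊤ : ℕ∞) w Ω)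
    (i : Fin n) {p : Fin n → ℝ} (hp : p ∈ Ω) :
    ContDiffAt ℝ (⊤ : ℕ∞) (Lder ξ i w) p := by
  have hwp : ContDiffAt ℝ (⊤ : ℕ∞) w p := hw.contDiffAt (hΩ.mem_nhds hp)
  have h1 : ContDiffAt ℝ (⊤ : ℕ∞) (fderiv ℝ w) p := hwp.fderiv_right (by simp)
  have h2 : ContDiffAt ℝ (⊤ : ℕ∞) (ξ i) p := (hξ i).contDiffAt (hΩ.mem_nhds hp)
  exact h1.clm_apply h2

lemma lder_lder {n : ℕ} {Ω : Set (Fin n → ℝ)} (hΩ : IsOpen Ω)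
    {ξ : Fin n → (Fin n → ℝ) → (Fin n → ℝ)} (hξ : ∀ i, ContDiffOn ℝ (⊤ : ℕ∞) (ξ i) Ω)
    {w : (Fin n → ℝ) → ℝ} (hw : ContDiffOn ℝ (⊤ : ℕ∞) w Ω)
    (i j : Fin n) {p : Fin n → ℝ} (hp : p ∈ Ω) :
    Lder ξ i (Lder ξ j w) p
      = fderiv ℝ (fderiv ℝ w) p (ξ i p) (ξ j p)
        + fderiv ℝ w p (fderiv ℝ (ξ j) p (ξ i p)) := by
  have hwp : ContDiffAt ℝ (⊤ : ℕ∞) w p := hw.contDiffAt (hΩ.mem_nhds hp)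
  have h1 : DifferentiableAt ℝ (fderiv ℝ w) p :=
    (hwp.fderiv_right (m := (⊤:ℕ∞)) (by simp)).differentiableAt
      (by decide)
  have h2 : DifferentiableAt ℝ (ξ j) p :=
    ((hξ j).contDiffAt (hΩ.mem_nhds hp)).differentiableAt
      (by decide)
  have := fderiv_clm_apply h1 h2
  show fderiv ℝ (fun q => fderiv ℝ w q (ξ j q)) p (ξ i p) = _
  rw [this]
  simp [add_comm]

lemma lder_comm {n : ℕ} {Ω : Set (Fin n → ℝ)} (hΩ : IsOpen Ω)
    {ξ : Fin n → (Fin n → ℝ) → (Fin n → ℝ)} (hξ : ∀ i, ContDiffOn ℝ (⊤ : ℕ∞) (ξ i) Ω)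
    {w : (Fin n → ℝ) → ℝ} (hw : ContDiffOn ℝ (⊤ : ℕ∞) w Ω)
    (c : Fin n → Fin n → Fin n → (Fin n → ℝ) → ℝ)
    (hc : ∀ i j, ∀ p ∈ Ω,
      fderiv ℝ (ξ j) p (ξ i p) - fderiv ℝ (ξ i) p (ξ j p) = ∑ k, c i j k p • ξ k p)
    (i j : Fin n) {p : Fin n → ℝ} (hp : p ∈ Ω) :
    Lder ξ i (Lder ξ j w) p - Lder ξ j (Lder ξ i w) p
      = ∑ k, c i j k p * Lder ξ k w p := by
  have hwp : ContDiffAt ℝ (⊤ : ℕ∞) w p := hw.contDiffAt (hΩ.mem_nhds hp)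
  have hsymm : IsSymmSndFDerivAt ℝ w p :=
    hwp.isSymmSndFDerivAt (by simp [minSmoothness_of_isRCLikeNormedField]; exact WithTop.coe_le_coe.mpr le_top)
  rw [lder_lder hΩ hξ hw i j hp, lder_lder hΩ hξ hw j i hp, hsymm (ξ i p) (ξ j p)]
  have h1 : fderiv ℝ w p (fderiv ℝ (ξ j) p (ξ i p)) - fderiv ℝ w p (fderiv ℝ (ξ i) p (ξ j p))
      = fderiv ℝ w p (∑ k, c i j k p • ξ k p) := by
    rw [← (fderiv ℝ w p).map_sub, hc i j p hp]
  have h2 : fderiv ℝ w p (∑ k, c i j k p • ξ k p) = ∑ k, c i j k p * Lder ξ k w p := by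
    rw [map_sum]
    exact Finset.sum_congr rfl fun k _ => by rw [(fderiv ℝ w p).map_smul]; rfl
  rw [← h2, ← h1]; ring


/-- if `L_i g = λ^i L_i h` for all `i`, then `h` satisfies the
second-order system (3) for conserved densities. -/
theorem stmt0 {n : ℕ} (Ω : Set (Fin n → ℝ)) (hΩ : IsOpen Ω)
    (ξ : Fin n → (Fin n → ℝ) → (Fin n → ℝ))
    (hξ : ∀ i, ContDiffOn ℝ (⊤ : ℕ∞) (ξ i) Ω)
    (hind : ∀ p ∈ Ω, LinearIndependent ℝ (fun i => ξ i p))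
    (c : Fin n → Fin n → Fin n → (Fin n → ℝ) → ℝ)
    (hc : ∀ i j, ∀ p ∈ Ω,
      fderiv ℝ (ξ j) p (ξ i p) - fderiv ℝ (ξ i) p (ξ j p) = ∑ k, c i j k p • ξ k p)
    (lam : Fin n → (Fin n → ℝ) → ℝ)
    (hlam : ∀ i, ContDiffOn ℝ (⊤ : ℕ∞) (lam i) Ω)
    (hdist : ∀ i j, i ≠ j → ∀ p ∈ Ω, lam i p ≠ lam j p)
    (g h : (Fin n → ℝ) → ℝ)
    (hg : ContDiffOn ℝ (⊤ : ℕ∞) g Ω) (hh : ContDiffOn ℝ (⊤ : ℕ∞) h Ω)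
    (hcl : ∀ i, ∀ p ∈ Ω, Lder ξ i g p = lam i p * Lder ξ i h p) :
    ∀ i j, i ≠ j → ∀ p ∈ Ω,
      Lder ξ i (Lder ξ j h) p
        = (Lder ξ j (lam i) p / (lam j p - lam i p)) * Lder ξ i h p
          + (Lder ξ i (lam j) p / (lam i p - lam j p)) * Lder ξ j h p
          + ∑ k, c i j k p * ((lam i p - lam k p) / (lam i p - lam j p)) * Lder ξ k h p := by
  intro i j hij p hp
  have hd : lam i p - lam j p ≠ 0 := sub_ne_zero.mpr (hdist i j hij p hp)
  have prodexp : ∀ a b : Fin n, Lder ξ a (Lder ξ b g) p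
      = lam b p * Lder ξ a (Lder ξ b h) p + Lder ξ b h p * Lder ξ a (lam b) p := by
    intro a b
    have hEq : Lder ξ b g =ᶠ[nhds p] fun q => lam b q * Lder ξ b h q :=
      Filter.eventuallyEq_of_mem (hΩ.mem_nhds hp) (fun q hq => hcl b q hq)
    have hfd : fderiv ℝ (Lder ξ b g) p = fderiv ℝ (fun q => lam b q * Lder ξ b h q) p :=
      hEq.fderiv_eq
    have hla : DifferentiableAt ℝ (lam b) p :=
      ((hlam b).contDiffAt (hΩ.mem_nhds hp)).differentiableAt
        (by decide)
    have hLb : DifferentiableAt ℝ (Lder ξ b h) p :=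
      (lder_contDiffAt hΩ hξ hh b hp).differentiableAt
        (by decide)
    show fderiv ℝ (Lder ξ b g) p (ξ a p) = _
    rw [hfd, fderiv_fun_mul hla hLb]
    simp [Lder]
  have commh := lder_comm hΩ hξ hh c hc i j hp
  have commg := lder_comm hΩ hξ hg c hc i j hp
  rw [prodexp i j, prodexp j i] at commg
  have hcg : ∀ k : Fin n, c i j k p * Lder ξ k g p = c i j k p * (lam k p * Lder ξ k h p) :=
    fun k => by rw [hcl k p hp]
  rw [Finset.sum_congr rfl (fun k _ => hcg k)] at commg
  have key : (lam i p - lam j p) * Lder ξ i (Lder ξ j h) p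
      = Lder ξ i (lam j) p * Lder ξ j h p - Lder ξ j (lam i) p * Lder ξ i h p
        + ∑ k, c i j k p * (lam i p - lam k p) * Lder ξ k h p := by
    have hS : ∑ k, c i j k p * (lam i p - lam k p) * Lder ξ k h p
        = lam i p * (∑ k, c i j k p * Lder ξ k h p)
          - ∑ k, c i j k p * (lam k p * Lder ξ k h p) := by
      rw [Finset.mul_sum, ← Finset.sum_sub_distrib]
      exact Finset.sum_congr rfl fun k _ => by ring
    rw [hS, ← commh, ← commg]
    ring
  have hsum : (∑ k, c i j k p * ((lam i p - lam k p) / (lam i p - lam j p)) * Lder ξ k h p)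
      = (∑ k, c i j k p * (lam i p - lam k p) * Lder ξ k h p) / (lam i p - lam j p) := by
    rw [Finset.sum_div]
    exact Finset.sum_congr rfl fun k _ => by ring
  have hA : Lder ξ i (Lder ξ j h) p
      = (Lder ξ i (lam j) p * Lder ξ j h p - Lder ξ j (lam i) p * Lder ξ i h p
          + ∑ k, c i j k p * (lam i p - lam k p) * Lder ξ k h p) / (lam i p - lam j p) := by
    rw [eq_div_iff hd]; linear_combination key
  have hd2 : -lam i p + lam j p ≠ 0 := by
    intro hcon; apply hd; linarith
  rw [hA, hsum]
  field_simp [hd2]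
  have hz : (-lam i p + lam j p)⁻¹ * (-lam i p + lam j p) = 1 := inv_mul_cancel₀ hd2
  linear_combination (Lder ξ j (lam i) p * Lder ξ i h p) * hz
end

section
/- Let u^1,…,u^n denote the coordinate functions on Ω, and let f^1,…,f^n be smooth functions with L_j f^s = λ^j L_j u^s for all j, s. Let φ be a smooth function with φ(p) ≠ λ^i(p) for all i, p, and define r : Ω → ℝ^{n+1} by r = (φ, u^1 φ − f^1, …, u^n φ − f^n). Then the following are equivalent: (a) for all i ≠ j and every p ∈ Ω, L_i L_j r(p) lies in the linear span of L_1 r(p),…,L_n r(p); (b) φ satisfies, for all i ≠ j, the nonlinear system L_i L_j φ = (1/(φ − λ^i) + 1/(φ − λ^j)) L_i φ · L_j φ + (L_j λ^i/(λ^j − λ^i))·((φ − λ^j)/(φ − λ^i))·L_i φ + (L_i λ^j/(λ^i − λ^j))·((φ − λ^i)/(φ − λ^j))·L_j φ + Σ_k c^k_{ij}·((λ^i − λ^k)/(λ^i − λ^j))·((φ − λ^j)/(φ − λ^k))·L_k φ. (This is the condition that the hypersurface r(Ω) is conjugate to the congruence y^i = u^i y^0 − f^i.) -/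
variable {n : ℕ} {ξ : Fin n → (Fin n → ℝ) → (Fin n → ℝ)} {k : Fin n} {p : Fin n → ℝ}

lemma Lder_coord (t : Fin n) : Lder ξ k (fun q => q t) p = ξ k p t := by
  show fderiv ℝ (⇑(ContinuousLinearMap.proj (R := ℝ) (φ := fun _ : Fin n => ℝ) t)) p (ξ k p) = _
  rw [ContinuousLinearMap.fderiv]; rfl

lemma Lder_mul {g h : (Fin n → ℝ) → ℝ} (hg : DifferentiableAt ℝ g p)
    (hh : DifferentiableAt ℝ h p) :
    Lder ξ k (fun q => g q * h q) p = Lder ξ k g p * h p + g p * Lder ξ k h p := by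
  show fderiv ℝ (fun q => g q * h q) p (ξ k p) = _
  rw [fderiv_fun_mul hg hh]
  simp [Lder]; ring

lemma Lder_sub {F : Type*} [NormedAddCommGroup F] [NormedSpace ℝ F]
    {g h : (Fin n → ℝ) → F} (hg : DifferentiableAt ℝ g p)
    (hh : DifferentiableAt ℝ h p) :
    Lder ξ k (fun q => g q - h q) p = Lder ξ k g p - Lder ξ k h p := by
  show fderiv ℝ (fun q => g q - h q) p (ξ k p) = _
  rw [fderiv_fun_sub hg hh]; rfl

lemma Lder_congr_nhds {F : Type*} [NormedAddCommGroup F] [NormedSpace ℝ F]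
    {g h : (Fin n → ℝ) → F} (hgh : g =ᶠ[nhds p] h) :
    Lder ξ k g p = Lder ξ k h p := by
  show fderiv ℝ g p (ξ k p) = fderiv ℝ h p (ξ k p)
  rw [hgh.fderiv_eq]

lemma Lder_comp_proj {m : ℕ} {w : (Fin n → ℝ) → (Fin m → ℝ)}
    (hw : DifferentiableAt ℝ w p) (s : Fin m) :
    Lder ξ k w p s = Lder ξ k (fun q => w q s) p := by
  have : (fun q => w q s) = (⇑(ContinuousLinearMap.proj (R := ℝ) (φ := fun _ : Fin m => ℝ) s)) ∘ w := rfl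
  show fderiv ℝ w p (ξ k p) s = fderiv ℝ (fun q => w q s) p (ξ k p)
  rw [this, fderiv_comp p (ContinuousLinearMap.differentiableAt _) hw,
    ContinuousLinearMap.fderiv]
  rfl

lemma hder_diff {w : (Fin n → ℝ) → ℝ} (hw : ContDiffAt ℝ (⊤ : ℕ∞) w p) :
    DifferentiableAt ℝ (fderiv ℝ w) p := by
  have h2 : ContDiffAt ℝ 1 (fderiv ℝ w) p := hw.fderiv_right (by norm_cast)
  exact h2.differentiableAt one_ne_zero

lemma Lder_differentiableAt {w : (Fin n → ℝ) → ℝ} (hw : ContDiffAt ℝ (⊤ : ℕ∞) w p)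
    (hξk : DifferentiableAt ℝ (ξ k) p) : DifferentiableAt ℝ (Lder ξ k w) p :=
  (hder_diff hw).clm_apply hξk

lemma Lder_comm {w : (Fin n → ℝ) → ℝ} {i j : Fin n} (hw : ContDiffAt ℝ (⊤ : ℕ∞) w p)
    (hξi : DifferentiableAt ℝ (ξ i) p) (hξj : DifferentiableAt ℝ (ξ j) p) :
    Lder ξ i (Lder ξ j w) p - Lder ξ j (Lder ξ i w) p
      = fderiv ℝ w p (fderiv ℝ (ξ j) p (ξ i p) - fderiv ℝ (ξ i) p (ξ j p)) := by
  have hD := hder_diff hw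
  have h1 : Lder ξ i (Lder ξ j w) p
      = fderiv ℝ w p (fderiv ℝ (ξ j) p (ξ i p)) + fderiv ℝ (fderiv ℝ w) p (ξ i p) (ξ j p) := by
    show fderiv ℝ (fun q => (fderiv ℝ w q) (ξ j q)) p (ξ i p) = _
    rw [fderiv_clm_apply hD hξj]
    simp
  have h2 : Lder ξ j (Lder ξ i w) p
      = fderiv ℝ w p (fderiv ℝ (ξ i) p (ξ j p)) + fderiv ℝ (fderiv ℝ w) p (ξ j p) (ξ i p) := by
    show fderiv ℝ (fun q => (fderiv ℝ w q) (ξ i q)) p (ξ j p) = _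
    rw [fderiv_clm_apply hD hξi]
    simp
  have hsymm : fderiv ℝ (fderiv ℝ w) p (ξ i p) (ξ j p) = fderiv ℝ (fderiv ℝ w) p (ξ j p) (ξ i p) :=
    (hw.isSymmSndFDerivAt (by rw [minSmoothness_of_isRCLikeNormedField]; exact WithTop.coe_le_coe.mpr le_top)) _ _
  rw [h1, h2, hsymm, map_sub]
  ring

lemma mem_span_criterion {n : ℕ} (b : Module.Basis (Fin n) ℝ (Fin n → ℝ)) (p : Fin n → ℝ)
    (α β : Fin n → ℝ) (hβ : ∀ k, β k ≠ 0) (V : Fin n → Fin (n + 1) → ℝ)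
    (hV : ∀ k s, V k s = Fin.cases (α k) (fun t => p t * α k + β k * b k t) s)
    (γ : ℝ) (w : Fin n → ℝ) (x : Fin (n + 1) → ℝ)
    (hx : ∀ s, x s = Fin.cases γ (fun t => p t * γ + w t) s) :
    x ∈ Submodule.span ℝ (Set.range V) ↔ γ = ∑ k, b.repr w k * α k / β k := by
  rw [Submodule.mem_span_range_iff_exists_fun]
  constructor
  · rintro ⟨d, hd⟩
    have h0 : ∑ k, d k * α k = γ := by
      have := congrFun hd 0
      simpa [hV, hx, Finset.sum_apply] using this
    have hw : ∑ k, (d k * β k) • b k = w := by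
      ext t
      have := congrFun hd t.succ
      simp only [Finset.sum_apply, Pi.smul_apply, smul_eq_mul, hV, hx, Fin.cases_succ] at this ⊢
      have h2 : ∑ k, (d k * (p t * α k) + d k * (β k * b k t)) = p t * γ + w t := by
        rw [← this]; congr 1; ext k; ring
      rw [Finset.sum_add_distrib] at h2
      have h3 : ∑ k, d k * (p t * α k) = p t * γ := by
        rw [← h0, Finset.mul_sum]; congr 1; ext k; ring
      have := h2
      rw [h3] at this
      have h4 : ∑ k, d k * (β k * b k t) = w t := by linarith
      rw [← h4]; congr 1; ext k; ring
    have hrep : ∀ k, b.repr w k = d k * β k := by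
      intro k
      rw [← hw]
      simp [map_sum, Finsupp.single_apply, Finset.sum_apply']
    rw [← h0]
    congr 1; ext k
    rw [hrep k, mul_right_comm, mul_div_assoc, div_self (hβ k), mul_one]
  · intro hγ
    refine ⟨fun k => b.repr w k / β k, ?_⟩
    ext s
    have hsum := b.sum_repr w
    induction s using Fin.cases with
    | zero =>
      simp only [Finset.sum_apply, Pi.smul_apply, smul_eq_mul, hV, hx, Fin.cases_zero]
      rw [hγ]
      congr 1; ext k; ring
    | succ t =>
      simp only [Finset.sum_apply, Pi.smul_apply, smul_eq_mul, hV, hx, Fin.cases_succ]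
      have hwt : ∑ k, b.repr w k * b k t = w t := by
        have := congrFun hsum t
        simpa [Finset.sum_apply, Pi.smul_apply] using this
      have : ∑ k, b.repr w k / β k * (p t * α k + β k * b k t)
          = p t * (∑ k, b.repr w k * α k / β k) + ∑ k, b.repr w k * b k t := by
        rw [Finset.mul_sum, ← Finset.sum_add_distrib]
        refine Finset.sum_congr rfl fun k _ => ?_
        field_simp [hβ k]
      rw [this, hwt, ← hγ]

lemma diff_coord (t : Fin n) : DifferentiableAt ℝ (fun q : Fin n → ℝ => q t) p :=
  (ContinuousLinearMap.proj (R := ℝ) (φ := fun _ : Fin n => ℝ) t).differentiableAt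

lemma Lder_add {g h : (Fin n → ℝ) → ℝ} (hg : DifferentiableAt ℝ g p)
    (hh : DifferentiableAt ℝ h p) :
    Lder ξ k (fun q => g q + h q) p = Lder ξ k g p + Lder ξ k h p := by
  show fderiv ℝ (fun q => g q + h q) p (ξ k p) = _
  rw [fderiv_fun_add hg hh]; rfl


set_option maxHeartbeats 1000000 in
/-- the hypersurface `r = (φ, u¹φ − f¹, …, uⁿφ − fⁿ)` is conjugate to the
congruence `y^i = u^i y^0 − f^i` (i.e. `L_i L_j r` is tangential for `i ≠ j`) if and only
if `φ` satisfies the nonlinear system (5). -/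
theorem stmt2 {n : ℕ} (Ω : Set (Fin n → ℝ)) (hΩ : IsOpen Ω)
    (ξ : Fin n → (Fin n → ℝ) → (Fin n → ℝ))
    (hξ : ∀ i, ContDiffOn ℝ (⊤ : ℕ∞) (ξ i) Ω)
    (hind : ∀ p ∈ Ω, LinearIndependent ℝ (fun i => ξ i p))
    (c : Fin n → Fin n → Fin n → (Fin n → ℝ) → ℝ)
    (hc : ∀ i j, ∀ p ∈ Ω,
      fderiv ℝ (ξ j) p (ξ i p) - fderiv ℝ (ξ i) p (ξ j p) = ∑ k, c i j k p • ξ k p)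
    (lam : Fin n → (Fin n → ℝ) → ℝ)
    (hlam : ∀ i, ContDiffOn ℝ (⊤ : ℕ∞) (lam i) Ω)
    (hdist : ∀ i j, i ≠ j → ∀ p ∈ Ω, lam i p ≠ lam j p)
    (f : Fin n → (Fin n → ℝ) → ℝ)
    (hf : ∀ s, ContDiffOn ℝ (⊤ : ℕ∞) (f s) Ω)
    (hcons : ∀ j s, ∀ p ∈ Ω,
      Lder ξ j (f s) p = lam j p * Lder ξ j (fun q => q s) p)
    (φ : (Fin n → ℝ) → ℝ) (hφ : ContDiffOn ℝ (⊤ : ℕ∞) φ Ω)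
    (hφlam : ∀ i, ∀ p ∈ Ω, φ p ≠ lam i p)
    (r : (Fin n → ℝ) → (Fin (n + 1) → ℝ))
    (hr : r = fun p => Matrix.vecCons (φ p) (fun s => p s * φ p - f s p)) :
    (∀ i j, i ≠ j → ∀ p ∈ Ω,
        Lder ξ i (Lder ξ j r) p ∈ Submodule.span ℝ (Set.range fun k => Lder ξ k r p))
      ↔
    (∀ i j, i ≠ j → ∀ p ∈ Ω,
      Lder ξ i (Lder ξ j φ) p
        = (1 / (φ p - lam i p) + 1 / (φ p - lam j p)) * (Lder ξ i φ p * Lder ξ j φ p)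
          + (Lder ξ j (lam i) p / (lam j p - lam i p))
            * ((φ p - lam j p) / (φ p - lam i p)) * Lder ξ i φ p
          + (Lder ξ i (lam j) p / (lam i p - lam j p))
            * ((φ p - lam i p) / (φ p - lam j p)) * Lder ξ j φ p
          + ∑ k, c i j k p * ((lam i p - lam k p) / (lam i p - lam j p))
            * ((φ p - lam j p) / (φ p - lam k p)) * Lder ξ k φ p) := by
  have hone : ((⊤ : ℕ∞) : WithTop ℕ∞) ≠ 0 := by simp
  have dφ : ∀ q ∈ Ω, DifferentiableAt ℝ φ q := fun q hq =>
    ((hφ.contDiffAt (hΩ.mem_nhds hq)).differentiableAt hone)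
  have dlam : ∀ k, ∀ q ∈ Ω, DifferentiableAt ℝ (lam k) q := fun k q hq =>
    (((hlam k).contDiffAt (hΩ.mem_nhds hq)).differentiableAt hone)
  have df : ∀ s, ∀ q ∈ Ω, DifferentiableAt ℝ (f s) q := fun s q hq =>
    (((hf s).contDiffAt (hΩ.mem_nhds hq)).differentiableAt hone)
  have dξ : ∀ k, ∀ q ∈ Ω, DifferentiableAt ℝ (ξ k) q := fun k q hq =>
    (((hξ k).contDiffAt (hΩ.mem_nhds hq)).differentiableAt hone)
  have dξc : ∀ k t, ∀ q ∈ Ω, DifferentiableAt ℝ (fun q' => ξ k q' t) q := fun k t q hq =>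
    differentiableAt_pi.mp (dξ k q hq) t
  have hrdiff : ∀ q ∈ Ω, DifferentiableAt ℝ r q := by
    intro q hq
    rw [hr]
    refine differentiableAt_pi.mpr ?_
    intro s
    induction s using Fin.cases with
    | zero => simpa only [Matrix.cons_val_zero] using dφ q hq
    | succ t =>
      simpa only [Matrix.cons_val_succ] using ((diff_coord t).fun_mul (dφ q hq)).fun_sub (df t q hq)
  have hVq : ∀ k, ∀ q ∈ Ω, ∀ s, Lder ξ k r q s
      = Fin.cases (Lder ξ k φ q)
          (fun t => q t * Lder ξ k φ q + (φ q - lam k q) * ξ k q t) s := by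
    intro k q hq s
    rw [Lder_comp_proj (hrdiff q hq) s]
    induction s using Fin.cases with
    | zero =>
      have h0 : (fun q' => r q' 0) = φ := by funext q'; rw [hr]; simp
      rw [h0, Fin.cases_zero]
    | succ t =>
      have he : (fun q' => r q' t.succ) = fun q' => q' t * φ q' - f t q' := by
        funext q'; rw [hr]; simp
      rw [he, Fin.cases_succ,
        Lder_sub ((diff_coord t).fun_mul (dφ q hq)) (df t q hq),
        Lder_mul (diff_coord t) (dφ q hq), Lder_coord, hcons k t q hq, Lder_coord]
      ring
  -- reduce to a pointwise statement
  suffices key : ∀ i j, i ≠ j → ∀ p ∈ Ω,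
      ((Lder ξ i (Lder ξ j r) p ∈ Submodule.span ℝ (Set.range fun k => Lder ξ k r p)) ↔
      (Lder ξ i (Lder ξ j φ) p
        = (1 / (φ p - lam i p) + 1 / (φ p - lam j p)) * (Lder ξ i φ p * Lder ξ j φ p)
          + (Lder ξ j (lam i) p / (lam j p - lam i p))
            * ((φ p - lam j p) / (φ p - lam i p)) * Lder ξ i φ p
          + (Lder ξ i (lam j) p / (lam i p - lam j p))
            * ((φ p - lam i p) / (φ p - lam j p)) * Lder ξ j φ p
          + ∑ k, c i j k p * ((lam i p - lam k p) / (lam i p - lam j p))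
            * ((φ p - lam j p) / (φ p - lam k p)) * Lder ξ k φ p)) by
    constructor
    · intro h i j hij p hp; exact (key i j hij p hp).mp (h i j hij p hp)
    · intro h i j hij p hp; exact (key i j hij p hp).mpr (h i j hij p hp)
  intro i j hij p hp
  haveI : Nonempty (Fin n) := ⟨i⟩
  have hpΩ : Ω ∈ nhds p := hΩ.mem_nhds hp
  -- basis from the frame at p
  have hcard : Fintype.card (Fin n) = Module.finrank ℝ (Fin n → ℝ) := by simp
  set b : Module.Basis (Fin n) ℝ (Fin n → ℝ) :=
    basisOfLinearIndependentOfCardEqFinrank (hind p hp) hcard with hbdef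
  have hb : ∀ k, b k = ξ k p := fun k =>
    congrFun (coe_basisOfLinearIndependentOfCardEqFinrank (hind p hp) hcard) k
  -- second derivative of r
  have dLj : ∀ q ∈ Ω, DifferentiableAt ℝ (Lder ξ j φ) q := fun q hq =>
    Lder_differentiableAt (hφ.contDiffAt (hΩ.mem_nhds hq)) (dξ j q hq)
  have hGr : Lder ξ j r =ᶠ[nhds p]
      (fun q => (Fin.cases (Lder ξ j φ q)
        (fun t => q t * Lder ξ j φ q + (φ q - lam j q) * ξ j q t) : Fin (n+1) → ℝ)) := by
    filter_upwards [hpΩ] with q hq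
    funext s
    exact hVq j q hq s
  have dG : DifferentiableAt ℝ (fun q => (Fin.cases (Lder ξ j φ q)
      (fun t => q t * Lder ξ j φ q + (φ q - lam j q) * ξ j q t) : Fin (n+1) → ℝ)) p := by
    refine differentiableAt_pi.mpr ?_
    intro s
    induction s using Fin.cases with
    | zero => simpa only [Fin.cases_zero] using dLj p hp
    | succ t =>
      simpa only [Fin.cases_succ] using
        ((diff_coord t).fun_mul (dLj p hp)).fun_add
          (((dφ p hp).fun_sub (dlam j p hp)).fun_mul (dξc j t p hp))
  have hX : ∀ s, Lder ξ i (Lder ξ j r) p s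
      = Fin.cases (Lder ξ i (Lder ξ j φ) p)
          (fun t => p t * Lder ξ i (Lder ξ j φ) p +
            (Lder ξ j φ p * ξ i p t + (Lder ξ i φ p - Lder ξ i (lam j) p) * ξ j p t
              + (φ p - lam j p) * fderiv ℝ (ξ j) p (ξ i p) t)) s := by
    intro s
    rw [show Lder ξ i (Lder ξ j r) p = Lder ξ i (fun q => (Fin.cases (Lder ξ j φ q)
      (fun t => q t * Lder ξ j φ q + (φ q - lam j q) * ξ j q t) : Fin (n+1) → ℝ)) p from
      Lder_congr_nhds hGr, Lder_comp_proj dG s]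
    induction s using Fin.cases with
    | zero =>
      simp only [Fin.cases_zero]
    | succ t =>
      have he : (fun q => (Fin.cases (Lder ξ j φ q)
          (fun t' => q t' * Lder ξ j φ q + (φ q - lam j q) * ξ j q t') : Fin (n+1) → ℝ) t.succ)
          = fun q => q t * Lder ξ j φ q + (φ q - lam j q) * ξ j q t := by
        funext q; simp
      have hproj : Lder ξ i (fun q => ξ j q t) p = fderiv ℝ (ξ j) p (ξ i p) t :=
        (Lder_comp_proj (dξ j p hp) t).symm
      rw [he, Fin.cases_succ,
        Lder_add ((diff_coord t).fun_mul (dLj p hp)) (((dφ p hp).fun_sub (dlam j p hp)).fun_mul (dξc j t p hp)),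
        Lder_mul (diff_coord t) (dLj p hp), Lder_coord,
        Lder_mul ((dφ p hp).fun_sub (dlam j p hp)) (dξc j t p hp),
        Lder_sub (dφ p hp) (dlam j p hp), hproj]
      ring
  -- the conservation-law constraints
  have hLf : ∀ k s, ∀ q ∈ Ω, Lder ξ k (f s) q = lam k q * ξ k q s := by
    intro k s q hq
    rw [hcons k s q hq, Lder_coord]
  have h1 : ∀ s, Lder ξ i (Lder ξ j (f s)) p
      = Lder ξ i (lam j) p * ξ j p s + lam j p * fderiv ℝ (ξ j) p (ξ i p) s := by
    intro s
    have heq : Lder ξ j (f s) =ᶠ[nhds p] fun q => lam j q * ξ j q s := by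
      filter_upwards [hpΩ] with q hq
      exact hLf j s q hq
    rw [Lder_congr_nhds heq, Lder_mul (dlam j p hp) (dξc j s p hp),
      show Lder ξ i (fun q => ξ j q s) p = fderiv ℝ (ξ j) p (ξ i p) s from
        (Lder_comp_proj (dξ j p hp) s).symm]
  have h2 : ∀ s, Lder ξ j (Lder ξ i (f s)) p
      = Lder ξ j (lam i) p * ξ i p s + lam i p * fderiv ℝ (ξ i) p (ξ j p) s := by
    intro s
    have heq : Lder ξ i (f s) =ᶠ[nhds p] fun q => lam i q * ξ i q s := by
      filter_upwards [hpΩ] with q hq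
      exact hLf i s q hq
    rw [Lder_congr_nhds heq, Lder_mul (dlam i p hp) (dξc i s p hp),
      show Lder ξ j (fun q => ξ i q s) p = fderiv ℝ (ξ i) p (ξ j p) s from
        (Lder_comp_proj (dξ i p hp) s).symm]
  have h3 : ∀ s, Lder ξ i (Lder ξ j (f s)) p - Lder ξ j (Lder ξ i (f s)) p
      = ∑ k, (c i j k p * lam k p) * ξ k p s := by
    intro s
    rw [Lder_comm ((hf s).contDiffAt hpΩ) (dξ i p hp) (dξ j p hp), hc i j p hp, map_sum]
    refine Finset.sum_congr rfl fun k _ => ?_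
    rw [map_smul]
    have hfd : fderiv ℝ (f s) p (ξ k p) = Lder ξ k (f s) p := rfl
    rw [smul_eq_mul, hfd, hLf k s p hp]
    ring
  have hvec : (Lder ξ i (lam j) p) • (b j : Fin n → ℝ) + lam j p • (fderiv ℝ (ξ j) p (ξ i p))
      - (Lder ξ j (lam i) p) • (b i : Fin n → ℝ) - lam i p • (fderiv ℝ (ξ i) p (ξ j p))
      = ∑ k, (c i j k p * lam k p) • (b k : Fin n → ℝ) := by
    funext s
    have h3' := h3 s
    rw [h1 s, h2 s] at h3'
    simp only [Pi.add_apply, Pi.sub_apply, Pi.smul_apply, smul_eq_mul, Finset.sum_apply, hb]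
    linarith [h3']
  have hcoefs : ∀ k, Lder ξ i (lam j) p * (if j = k then 1 else 0)
      + lam j p * b.repr (fderiv ℝ (ξ j) p (ξ i p)) k
      - Lder ξ j (lam i) p * (if i = k then 1 else 0)
      - lam i p * b.repr (fderiv ℝ (ξ i) p (ξ j p)) k
      = c i j k p * lam k p := by
    intro k
    have h := congrArg (fun y => b.repr y k) hvec
    simpa [map_add, map_sub, map_smul, map_sum, Module.Basis.repr_self,
      Finsupp.single_apply, Finsupp.smul_apply, Finsupp.sub_apply, Finsupp.add_apply,
      Finsupp.finset_sum_apply] using h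
  have hAB : ∀ k, b.repr (fderiv ℝ (ξ j) p (ξ i p)) k
      - b.repr (fderiv ℝ (ξ i) p (ξ j p)) k = c i j k p := by
    intro k
    have h := congrArg (fun y => b.repr y k) (hc i j p hp)
    simp only [map_sub, map_sum, map_smul, Finsupp.sub_apply] at h
    rw [h]
    have : ∀ l, (ξ l p : Fin n → ℝ) = b l := fun l => (hb l).symm
    simp [this, Module.Basis.repr_self, Finsupp.single_apply, Finsupp.smul_apply]
  -- membership criterion
  have hβ : ∀ k, φ p - lam k p ≠ 0 := fun k => sub_ne_zero_of_ne (hφlam k p hp)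
  have hVb : ∀ k s, Lder ξ k r p s = Fin.cases (Lder ξ k φ p)
      (fun t => p t * Lder ξ k φ p + (φ p - lam k p) * b k t) s := by
    intro k s
    rw [hVq k p hp s]
    induction s using Fin.cases with
    | zero => rfl
    | succ t => rw [Fin.cases_succ, Fin.cases_succ, hb]
  have hmem := mem_span_criterion b p (fun k => Lder ξ k φ p) (fun k => φ p - lam k p) hβ
    (fun k => Lder ξ k r p) hVb (Lder ξ i (Lder ξ j φ) p)
    (fun t => Lder ξ j φ p * ξ i p t + (Lder ξ i φ p - Lder ξ i (lam j) p) * ξ j p t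
      + (φ p - lam j p) * fderiv ℝ (ξ j) p (ξ i p) t)
    (Lder ξ i (Lder ξ j r) p) hX
  rw [hmem]
  beta_reduce
  -- compute the coordinates of w
  have hδ : ∀ k, b.repr (fun t => Lder ξ j φ p * ξ i p t
      + (Lder ξ i φ p - Lder ξ i (lam j) p) * ξ j p t
      + (φ p - lam j p) * fderiv ℝ (ξ j) p (ξ i p) t) k
      = Lder ξ j φ p * (if i = k then 1 else 0)
        + (Lder ξ i φ p - Lder ξ i (lam j) p) * (if j = k then 1 else 0)
        + (φ p - lam j p) * b.repr (fderiv ℝ (ξ j) p (ξ i p)) k := by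
    intro k
    have hwv : (fun t => Lder ξ j φ p * ξ i p t
        + (Lder ξ i φ p - Lder ξ i (lam j) p) * ξ j p t
        + (φ p - lam j p) * fderiv ℝ (ξ j) p (ξ i p) t)
        = (Lder ξ j φ p) • (b i : Fin n → ℝ)
          + (Lder ξ i φ p - Lder ξ i (lam j) p) • (b j : Fin n → ℝ)
          + (φ p - lam j p) • (fderiv ℝ (ξ j) p (ξ i p)) := by
      funext t
      simp [hb]
    rw [hwv]
    simp [map_add, map_smul, Module.Basis.repr_self, Finsupp.single_apply, Finsupp.smul_apply,
      Finsupp.add_apply]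
    split_ifs <;> ring
  -- final algebraic identity
  have hij' : lam i p - lam j p ≠ 0 := sub_ne_zero_of_ne (hdist i j hij p hp)
  have hji' : lam j p - lam i p ≠ 0 := sub_ne_zero_of_ne (hdist j i (Ne.symm hij) p hp)
  have hterm : ∀ k, b.repr (fun t => Lder ξ j φ p * ξ i p t
      + (Lder ξ i φ p - Lder ξ i (lam j) p) * ξ j p t
      + (φ p - lam j p) * fderiv ℝ (ξ j) p (ξ i p) t) k
        * Lder ξ k φ p / (φ p - lam k p)
      = c i j k p * ((lam i p - lam k p) / (lam i p - lam j p))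
          * ((φ p - lam j p) / (φ p - lam k p)) * Lder ξ k φ p
        + (if k = i then Lder ξ i φ p * Lder ξ j φ p / (φ p - lam i p)
            + (Lder ξ j (lam i) p / (lam j p - lam i p))
              * ((φ p - lam j p) / (φ p - lam i p)) * Lder ξ i φ p else 0)
        + (if k = j then Lder ξ i φ p * Lder ξ j φ p / (φ p - lam j p)
            + (Lder ξ i (lam j) p / (lam i p - lam j p))
              * ((φ p - lam i p) / (φ p - lam j p)) * Lder ξ j φ p else 0) := by
    intro k
    rw [hδ k]
    have hck := hcoefs k
    have hABk := hAB k
    rcases eq_or_ne i k with rfl | hki'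
    · simp only [eq_self_iff_true, if_true, hij, Ne.symm hij, if_false, mul_one, mul_zero,
        add_zero, zero_add, sub_zero, zero_sub] at hck ⊢
      have hAi : b.repr (fderiv ℝ (ξ j) p (ξ i p)) i
          = Lder ξ j (lam i) p / (lam j p - lam i p) := by
        rw [eq_div_iff hji']
        linear_combination hck - lam i p * hABk
      rw [hAi]
      field_simp [hβ i, hβ j, hij', hji']
      ring
    · rcases eq_or_ne j k with rfl | hkj'
      · simp only [eq_self_iff_true, if_true, hij, Ne.symm hij, if_false, mul_one, mul_zero,
          add_zero, zero_add, sub_zero, zero_sub] at hck ⊢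
        have hAj : b.repr (fderiv ℝ (ξ j) p (ξ i p)) j
            = (c i j j p * (lam j p - lam i p) - Lder ξ i (lam j) p) / (lam j p - lam i p) := by
          rw [eq_div_iff hji']
          linear_combination hck - lam i p * hABk
        rw [hAj]
        field_simp [hβ i, hβ j, hij', hji']
        ring
      · have hki : k ≠ i := Ne.symm hki'
        have hkj : k ≠ j := Ne.symm hkj'
        simp only [hki, hkj, Ne.symm hki, Ne.symm hkj, if_false, mul_one, mul_zero,
          add_zero, zero_add, sub_zero, zero_sub] at hck ⊢
        have hAk : b.repr (fderiv ℝ (ξ j) p (ξ i p)) k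
            = c i j k p * (lam k p - lam i p) / (lam j p - lam i p) := by
          rw [eq_div_iff hji']
          linear_combination hck - lam i p * hABk
        rw [hAk]
        field_simp [hβ i, hβ j, hβ k, hij', hji']
        ring
  have hsum : ∑ k, b.repr (fun t => Lder ξ j φ p * ξ i p t
      + (Lder ξ i φ p - Lder ξ i (lam j) p) * ξ j p t
      + (φ p - lam j p) * fderiv ℝ (ξ j) p (ξ i p) t) k
        * Lder ξ k φ p / (φ p - lam k p)
      = (1 / (φ p - lam i p) + 1 / (φ p - lam j p)) * (Lder ξ i φ p * Lder ξ j φ p)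
          + (Lder ξ j (lam i) p / (lam j p - lam i p))
            * ((φ p - lam j p) / (φ p - lam i p)) * Lder ξ i φ p
          + (Lder ξ i (lam j) p / (lam i p - lam j p))
            * ((φ p - lam i p) / (φ p - lam j p)) * Lder ξ j φ p
          + ∑ k, c i j k p * ((lam i p - lam k p) / (lam i p - lam j p))
            * ((φ p - lam j p) / (φ p - lam k p)) * Lder ξ k φ p := by
    rw [Finset.sum_congr rfl (fun k _ => hterm k), Finset.sum_add_distrib,
      Finset.sum_add_distrib, Finset.sum_ite_eq' Finset.univ i, Finset.sum_ite_eq' Finset.univ j]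
    simp only [Finset.mem_univ, if_true]
    ring
  rw [hsum]
end

section
/- Let n = 3 and let Ω ⊆ ℝ^3 be open and connected. Let λ^1, λ^2, λ^3 and μ^1, μ^2, μ^3 be smooth on Ω with λ^i ≠ λ^j and μ^i ≠ μ^j pointwise for i ≠ j. Assume: (i) L_j μ^i/(μ^j − μ^i) = L_j λ^i/(λ^j − λ^i) for all i ≠ j; (ii) c^k_{ij}·((μ^i − μ^k)/(μ^i − μ^j) − (λ^i − λ^k)/(λ^i − λ^j)) = 0 for all pairwise distinct i, j, k; and (iii) for some pairwise distinct indices i₀, j₀, k₀ the coefficient c^{k₀}_{i₀ j₀} is nonzero at every point of Ω. Then there exist constants a, b ∈ ℝ such that μ^i = b·λ^i − a on Ω for i = 1, 2, 3 (so the commuting flow is trivial). -/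
/-- Three pairwise distinct elements of `Fin 3` exhaust it. -/
lemma fin3_cases (i₀ j₀ k₀ i : Fin 3) (h1 : i₀ ≠ j₀) (h2 : j₀ ≠ k₀) (h3 : i₀ ≠ k₀) :
    i = i₀ ∨ i = j₀ ∨ i = k₀ := by
  revert i₀ j₀ k₀ i; decide

/-- For each `j : Fin 3` there are two distinct other indices. -/
lemma fin3_two (j : Fin 3) : ∃ i1 i2 : Fin 3, i1 ≠ j ∧ i2 ≠ j ∧ i1 ≠ i2 := by
  revert j; decide

/-- A function with zero derivative on an open preconnected set takes equal values. -/
lemma const_of_fderiv_zero {E : Type*} [NormedAddCommGroup E] [NormedSpace ℝ E]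
    {f : E → ℝ} {s : Set E} (hs : IsOpen s) (hpc : IsPreconnected s)
    (hdiff : ∀ x ∈ s, DifferentiableAt ℝ f x)
    (hz : ∀ x ∈ s, fderiv ℝ f x = 0)
    {x y : E} (hx : x ∈ s) (hy : y ∈ s) : f x = f y := by
  -- local constancy on balls
  have hloc : ∀ z ∈ s, ∃ ε > 0, Metric.ball z ε ⊆ s ∧ ∀ w ∈ Metric.ball z ε, f w = f z := by
    intro z hzs
    obtain ⟨ε, hε, hball⟩ := Metric.isOpen_iff.1 hs z hzs
    refine ⟨ε, hε, hball, fun w hw => ?_⟩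
    refine (convex_ball z ε).is_const_of_fderivWithin_eq_zero
      (fun u hu => (hdiff u (hball hu)).differentiableWithinAt) ?_ hw (Metric.mem_ball_self hε)
    intro u hu
    rw [fderivWithin_of_isOpen Metric.isOpen_ball hu]
    exact hz u (hball hu)
  by_contra hne
  set u : Set E := {z | z ∈ s ∧ f z = f x} with hu
  set v : Set E := {z | z ∈ s ∧ f z ≠ f x} with hv
  have hou : IsOpen u := by
    rw [isOpen_iff_mem_nhds]
    rintro z ⟨hzs, hzf⟩
    obtain ⟨ε, hε, hsub, hcst⟩ := hloc z hzs
    refine Filter.mem_of_superset (Metric.ball_mem_nhds z hε) ?_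
    intro w hw
    exact ⟨hsub hw, by rw [hcst w hw, hzf]⟩
  have hov : IsOpen v := by
    rw [isOpen_iff_mem_nhds]
    rintro z ⟨hzs, hzf⟩
    obtain ⟨ε, hε, hsub, hcst⟩ := hloc z hzs
    refine Filter.mem_of_superset (Metric.ball_mem_nhds z hε) ?_
    intro w hw
    exact ⟨hsub hw, by rw [hcst w hw]; exact hzf⟩
  have hsub : s ⊆ u ∪ v := by
    intro z hz
    by_cases h : f z = f x
    · exact Or.inl ⟨hz, h⟩
    · exact Or.inr ⟨hz, h⟩
  obtain ⟨z, _, ⟨_, h1⟩, ⟨_, h2⟩⟩ :=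
    hpc u v hou hov hsub ⟨x, hx, hx, rfl⟩ ⟨y, hy, hy, fun h => hne h.symm⟩
  exact h2 h1

/-- for `n = 3`, if the commuting-flow equations (i), (ii) hold and some
coefficient `c^{k₀}_{i₀j₀}` (with pairwise distinct indices) is everywhere nonzero on a
connected `Ω`, then `μ^i = b·λ^i − a` for constants `a, b` (the commuting flow is trivial). -/
theorem stmt5 (Ω : Set (Fin 3 → ℝ)) (hΩ : IsOpen Ω) (hconn : IsConnected Ω)
    (ξ : Fin 3 → (Fin 3 → ℝ) → (Fin 3 → ℝ))
    (hξ : ∀ i, ContDiffOn ℝ (⊤ : ℕ∞) (ξ i) Ω)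
    (hind : ∀ p ∈ Ω, LinearIndependent ℝ (fun i => ξ i p))
    (c : Fin 3 → Fin 3 → Fin 3 → (Fin 3 → ℝ) → ℝ)
    (hc : ∀ i j, ∀ p ∈ Ω,
      fderiv ℝ (ξ j) p (ξ i p) - fderiv ℝ (ξ i) p (ξ j p) = ∑ k, c i j k p • ξ k p)
    (lam mu : Fin 3 → (Fin 3 → ℝ) → ℝ)
    (hlam : ∀ i, ContDiffOn ℝ (⊤ : ℕ∞) (lam i) Ω)
    (hmu : ∀ i, ContDiffOn ℝ (⊤ : ℕ∞) (mu i) Ω)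
    (hlamdist : ∀ i j, i ≠ j → ∀ p ∈ Ω, lam i p ≠ lam j p)
    (hmudist : ∀ i j, i ≠ j → ∀ p ∈ Ω, mu i p ≠ mu j p)
    (hcomm1 : ∀ i j, i ≠ j → ∀ p ∈ Ω,
      Lder ξ j (mu i) p / (mu j p - mu i p) = Lder ξ j (lam i) p / (lam j p - lam i p))
    (hcomm2 : ∀ i j k, i ≠ j → j ≠ k → i ≠ k → ∀ p ∈ Ω,
      c i j k p * ((mu i p - mu k p) / (mu i p - mu j p)
        - (lam i p - lam k p) / (lam i p - lam j p)) = 0)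
    (i₀ j₀ k₀ : Fin 3) (hij : i₀ ≠ j₀) (hjk : j₀ ≠ k₀) (hik : i₀ ≠ k₀)
    (hc0 : ∀ p ∈ Ω, c i₀ j₀ k₀ p ≠ 0) :
    ∃ a b : ℝ, ∀ i, ∀ p ∈ Ω, mu i p = b * lam i p - a := by
  classical
  obtain ⟨p₀, hp₀⟩ := hconn.nonempty
  obtain ⟨B, hBdef⟩ : ∃ B : (Fin 3 → ℝ) → ℝ,
      B = fun p => (mu i₀ p - mu j₀ p) / (lam i₀ p - lam j₀ p) := ⟨_, rfl⟩
  obtain ⟨A, hAdef⟩ : ∃ A : (Fin 3 → ℝ) → ℝ,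
      A = fun p => mu i₀ p - B p * lam i₀ p := ⟨_, rfl⟩
  have hdlam : ∀ i, ∀ p ∈ Ω, DifferentiableAt ℝ (lam i) p := fun i p hp =>
    ((hlam i).differentiableOn (by simp)).differentiableAt (hΩ.mem_nhds hp)
  have hdmu : ∀ i, ∀ p ∈ Ω, DifferentiableAt ℝ (mu i) p := fun i p hp =>
    ((hmu i).differentiableOn (by simp)).differentiableAt (hΩ.mem_nhds hp)
  have hDne : ∀ p ∈ Ω, lam i₀ p - lam j₀ p ≠ 0 := fun p hp =>
    sub_ne_zero.2 (hlamdist _ _ hij p hp)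
  have hdB : ∀ p ∈ Ω, DifferentiableAt ℝ B p := by
    intro p hp
    rw [hBdef]
    have h1 : DifferentiableAt ℝ (fun q => mu i₀ q - mu j₀ q) p :=
      (hdmu i₀ p hp).sub (hdmu j₀ p hp)
    have h2 : DifferentiableAt ℝ (fun q => lam i₀ q - lam j₀ q) p :=
      (hdlam i₀ p hp).sub (hdlam j₀ p hp)
    have heq : (fun q => (mu i₀ q - mu j₀ q) / (lam i₀ q - lam j₀ q))
        = fun q => (mu i₀ q - mu j₀ q) * (lam i₀ q - lam j₀ q)⁻¹ := by
      funext q; rw [div_eq_mul_inv]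
    rw [heq]
    exact h1.mul (h2.inv (hDne p hp))
  have hdA : ∀ p ∈ Ω, DifferentiableAt ℝ A p := by
    intro p hp
    rw [hAdef]
    exact (hdmu i₀ p hp).sub ((hdB p hp).mul (hdlam i₀ p hp))
  -- the pointwise affine relation
  have hBA : ∀ p ∈ Ω, ∀ i, mu i p = B p * lam i p + A p := by
    intro p hp i
    have hD := hDne p hp
    have hBmul : B p * (lam i₀ p - lam j₀ p) = mu i₀ p - mu j₀ p := by
      rw [hBdef]; exact div_mul_cancel₀ _ hD
    have hAp : A p = mu i₀ p - B p * lam i₀ p := by rw [hAdef]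
    rcases fin3_cases i₀ j₀ k₀ i hij hjk hik with h | h | h
    · rw [h, hAp]; ring
    · rw [h, hAp]; linear_combination hBmul
    · rw [h]
      have h2 := hcomm2 i₀ j₀ k₀ hij hjk hik p hp
      have hcne := hc0 p hp
      have h3 : (mu i₀ p - mu k₀ p) / (mu i₀ p - mu j₀ p)
          = (lam i₀ p - lam k₀ p) / (lam i₀ p - lam j₀ p) :=
        sub_eq_zero.1 ((mul_eq_zero.1 h2).resolve_left hcne)
      rw [div_eq_div_iff (sub_ne_zero.2 (hmudist _ _ hij p hp)) hD] at h3
      -- h3 : (mu i₀ - mu k₀) * (lam i₀ - lam j₀) = (lam i₀ - lam k₀) * (mu i₀ - mu j₀)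
      have h4 : (mu i₀ p - mu k₀ p) * (lam i₀ p - lam j₀ p)
          = (lam i₀ p - lam k₀ p) * B p * (lam i₀ p - lam j₀ p) := by
        rw [mul_assoc, hBmul]; exact h3
      have h5 : mu i₀ p - mu k₀ p = (lam i₀ p - lam k₀ p) * B p := mul_right_cancel₀ hD h4
      rw [hAp]; linear_combination -h5
  -- derivative relation from (i)
  have hkey : ∀ p ∈ Ω, ∀ i j, i ≠ j →
      fderiv ℝ (mu i) p (ξ j p) = B p * fderiv ℝ (lam i) p (ξ j p) := by
    intro p hp i j hijne
    have h1 := hcomm1 i j hijne p hp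
    simp only [Lder] at h1
    have hmne : mu j p - mu i p ≠ 0 := sub_ne_zero.2 (hmudist j i (Ne.symm hijne) p hp)
    have hlne : lam j p - lam i p ≠ 0 := sub_ne_zero.2 (hlamdist j i (Ne.symm hijne) p hp)
    rw [div_eq_div_iff hmne hlne] at h1
    have hi := hBA p hp i
    have hj := hBA p hp j
    have h2 : mu j p - mu i p = B p * (lam j p - lam i p) := by linear_combination hj - hi
    have h3 : fderiv ℝ (mu i) p (ξ j p) * (lam j p - lam i p)
        = B p * fderiv ℝ (lam i) p (ξ j p) * (lam j p - lam i p) := by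
      rw [h1, h2]; ring
    exact mul_right_cancel₀ hlne h3
  -- decomposition of the derivative of mu i
  have hfd : ∀ p ∈ Ω, ∀ i, fderiv ℝ (mu i) p
      = B p • fderiv ℝ (lam i) p + lam i p • fderiv ℝ B p + fderiv ℝ A p := by
    intro p hp i
    have heq : mu i =ᶠ[nhds p] fun q => B q * lam i q + A q := by
      filter_upwards [hΩ.mem_nhds hp] with q hq using hBA q hq i
    rw [heq.fderiv_eq, fderiv_fun_add ((hdB p hp).fun_mul (hdlam i p hp)) (hdA p hp),
        fderiv_fun_mul (hdB p hp) (hdlam i p hp)]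
  -- the derivatives of B and A applied to the frame vanish
  have hzero : ∀ p ∈ Ω, ∀ j i, i ≠ j →
      lam i p * fderiv ℝ B p (ξ j p) + fderiv ℝ A p (ξ j p) = 0 := by
    intro p hp j i hne
    have h1 := hkey p hp i j hne
    have h2 := congrArg (fun L : (Fin 3 → ℝ) →L[ℝ] ℝ => L (ξ j p)) (hfd p hp i)
    simp only [ContinuousLinearMap.add_apply, ContinuousLinearMap.coe_smul',
      Pi.smul_apply, smul_eq_mul] at h2
    linarith [h1, h2]
  have hdBA0 : ∀ p ∈ Ω, fderiv ℝ B p = 0 ∧ fderiv ℝ A p = 0 := by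
    intro p hp
    have happ : ∀ j, fderiv ℝ B p (ξ j p) = 0 ∧ fderiv ℝ A p (ξ j p) = 0 := by
      intro j
      obtain ⟨i1, i2, h1, h2, h12⟩ := fin3_two j
      have e1 := hzero p hp j i1 h1
      have e2 := hzero p hp j i2 h2
      have hlne : lam i1 p - lam i2 p ≠ 0 := sub_ne_zero.2 (hlamdist _ _ h12 p hp)
      have hB0 : fderiv ℝ B p (ξ j p) = 0 := by
        have h3 : (lam i1 p - lam i2 p) * fderiv ℝ B p (ξ j p) = 0 := by
          linear_combination e1 - e2
        exact (mul_eq_zero.1 h3).resolve_left hlne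
      refine ⟨hB0, ?_⟩
      rw [hB0, mul_zero, zero_add] at e1
      exact e1
    have hcard : Fintype.card (Fin 3) = Module.finrank ℝ (Fin 3 → ℝ) := by
      simp [Module.finrank_fin_fun]
    set bs := basisOfLinearIndependentOfCardEqFinrank (hind p hp) hcard with hbsdef
    have hbs : ∀ j, bs j = ξ j p := fun j => by
      rw [hbsdef, coe_basisOfLinearIndependentOfCardEqFinrank]
    constructor
    · refine ContinuousLinearMap.coe_injective (bs.ext fun j => ?_)
      simp [hbs j, (happ j).1]
    · refine ContinuousLinearMap.coe_injective (bs.ext fun j => ?_)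
      simp [hbs j, (happ j).2]
  -- B and A are constant on Ω
  have hBconst : ∀ p ∈ Ω, B p = B p₀ := fun p hp =>
    const_of_fderiv_zero hΩ hconn.isPreconnected (fun x hx => hdB x hx)
      (fun x hx => (hdBA0 x hx).1) hp hp₀
  have hAconst : ∀ p ∈ Ω, A p = A p₀ := fun p hp =>
    const_of_fderiv_zero hΩ hconn.isPreconnected (fun x hx => hdA x hx)
      (fun x hx => (hdBA0 x hx).2) hp hp₀
  refine ⟨-(A p₀), B p₀, fun i p hp => ?_⟩
  have h := hBA p hp i
  rw [hBconst p hp, hAconst p hp] at h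
  linarith
end

section
/- Let u^1,…,u^n be smooth functions on Ω such that the Jacobian matrix (∂_j u^s) is invertible at every point, and suppose each u^s satisfies ∂_i ∂_j u^s = a_{ij} ∂_i u^s + a_{ji} ∂_j u^s for all i ≠ j, where a_{ij} (i ≠ j) are smooth functions on Ω. Then the a_{ij} satisfy the semihamiltonian conditions ∂_k a_{ij} = a_{ik} a_{kj} + a_{ij} a_{jk} − a_{ij} a_{ik} for all pairwise distinct i, j, k. -/
/-- Partial derivative with respect to the `i`-th coordinate. -/
noncomputable def pd {n : ℕ} {F : Type*} [NormedAddCommGroup F] [NormedSpace ℝ F]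
    (i : Fin n) (w : (Fin n → ℝ) → F) : (Fin n → ℝ) → F :=
  fun p => fderiv ℝ w p (Pi.single i 1)

private lemma pd_congr {n : ℕ} {f g : (Fin n → ℝ) → ℝ} {p : Fin n → ℝ}
    (h : f =ᶠ[nhds p] g) (k : Fin n) : pd k f p = pd k g p := by
  unfold pd; rw [h.fderiv_eq]

private lemma pd_smoothOn {n : ℕ} {Ω : Set (Fin n → ℝ)} (hΩ : IsOpen Ω)
    {f : (Fin n → ℝ) → ℝ} (hf : ContDiffOn ℝ (⊤ : ℕ∞) f Ω) (i : Fin n) :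
    ContDiffOn ℝ (⊤ : ℕ∞) (pd i f) Ω := by
  have h1 : ContDiffOn ℝ (⊤ : ℕ∞) (fun p => fderiv ℝ f p) Ω :=
    hf.fderiv_of_isOpen hΩ (by simp)
  exact h1.clm_apply contDiffOn_const

private lemma pd_symm {n : ℕ} {Ω : Set (Fin n → ℝ)} (hΩ : IsOpen Ω)
    {f : (Fin n → ℝ) → ℝ} (hf : ContDiffOn ℝ (⊤ : ℕ∞) f Ω) (i j : Fin n)
    {p : Fin n → ℝ} (hp : p ∈ Ω) : pd i (pd j f) p = pd j (pd i f) p := by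
  have hat : ContDiffAt ℝ (⊤ : ℕ∞) f p := hf.contDiffAt (hΩ.mem_nhds hp)
  have hsym := hat.isSymmSndFDerivAt (by rw [minSmoothness_of_isRCLikeNormedField]; exact_mod_cast ENat.natCast_le_of_coe_top_le_withTop le_rfl 2)
  have hd : DifferentiableAt ℝ (fderiv ℝ f) p :=
    (hat.fderiv_right (m := (⊤ : ℕ∞)) (by simp)).differentiableAt (by simp)
  have e : ∀ (v w : Fin n → ℝ), fderiv ℝ (fun q => fderiv ℝ f q w) p v
      = fderiv ℝ (fderiv ℝ f) p v w := by
    intro v w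
    rw [fderiv_clm_apply hd (differentiableAt_const w)]
    simp
  unfold pd
  rw [e, e, hsym]

private lemma pd_mul {n : ℕ} {a b : (Fin n → ℝ) → ℝ} {p : Fin n → ℝ}
    (ha : DifferentiableAt ℝ a p) (hb : DifferentiableAt ℝ b p) (k : Fin n) :
    pd k (fun q => a q * b q) p = pd k a p * b p + a p * pd k b p := by
  unfold pd
  rw [fderiv_fun_mul ha hb]
  simp only [ContinuousLinearMap.add_apply, ContinuousLinearMap.smul_apply, smul_eq_mul]
  ring

private lemma pd_add {n : ℕ} {a b : (Fin n → ℝ) → ℝ} {p : Fin n → ℝ}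
    (ha : DifferentiableAt ℝ a p) (hb : DifferentiableAt ℝ b p) (k : Fin n) :
    pd k (fun q => a q + b q) p = pd k a p + pd k b p := by
  unfold pd
  rw [fderiv_fun_add ha hb]
  simp

/-- if the system `∂_i∂_j u = a_{ij} ∂_i u + a_{ji} ∂_j u` possesses `n`
solutions `u^1,…,u^n` with everywhere invertible Jacobian, then the coefficients satisfy
the semihamiltonian conditions. -/
theorem stmt6 {n : ℕ} (Ω : Set (Fin n → ℝ)) (hΩ : IsOpen Ω)
    (u : Fin n → (Fin n → ℝ) → ℝ)
    (hu : ∀ s, ContDiffOn ℝ (⊤ : ℕ∞) (u s) Ω)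
    (a : Fin n → Fin n → (Fin n → ℝ) → ℝ)
    (ha : ∀ i j, i ≠ j → ContDiffOn ℝ (⊤ : ℕ∞) (a i j) Ω)
    (hjac : ∀ p ∈ Ω, (Matrix.of fun s j => pd j (u s) p).det ≠ 0)
    (heq : ∀ s, ∀ i j, i ≠ j → ∀ p ∈ Ω,
      pd i (pd j (u s)) p = a i j p * pd i (u s) p + a j i p * pd j (u s) p) :
    ∀ i j k, i ≠ j → j ≠ k → i ≠ k → ∀ p ∈ Ω,
      pd k (a i j) p
        = a i k p * a k j p + a i j p * a j k p - a i j p * a i k p := by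
  intro i j k hij hjk hik p hp
  have hnhds : Ω ∈ nhds p := hΩ.mem_nhds hp
  -- smoothness of first partials
  have hU : ∀ s m, ContDiffOn ℝ (⊤ : ℕ∞) (pd m (u s)) Ω :=
    fun s m => pd_smoothOn hΩ (hu s) m
  -- differentiability at p
  have dA : ∀ i' j', i' ≠ j' → DifferentiableAt ℝ (a i' j') p := fun i' j' h =>
    ((ha i' j' h).contDiffAt hnhds).differentiableAt (by simp)
  have dU : ∀ s m, DifferentiableAt ℝ (pd m (u s)) p := fun s m =>
    ((hU s m).contDiffAt hnhds).differentiableAt (by simp)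
  -- the key linear relation, one for each solution s
  set ci := pd k (a i j) p + a i j p * a i k p - a k j p * a i k p - a j k p * a i j p with hci
  set cj := pd k (a j i) p + a j i p * a j k p - pd i (a j k) p - a j k p * a j i p with hcj
  set ck := a i j p * a k i p + a j i p * a k j p - pd i (a k j) p - a k j p * a k i p with hck
  have key : ∀ s, ci * pd i (u s) p + cj * pd j (u s) p + ck * pd k (u s) p = 0 := by
    intro s
    -- differentiate the (i,j) equation in direction k
    have e1 : pd k (pd i (pd j (u s))) p
        = pd k (a i j) p * pd i (u s) p + a i j p * pd k (pd i (u s)) p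
          + (pd k (a j i) p * pd j (u s) p + a j i p * pd k (pd j (u s)) p) := by
      have hcg : pd i (pd j (u s)) =ᶠ[nhds p]
          (fun q => a i j q * pd i (u s) q + a j i q * pd j (u s) q) := by
        filter_upwards [hnhds] with q hq using heq s i j hij q hq
      rw [pd_congr hcg k,
        pd_add (a := fun q => a i j q * pd i (u s) q) (b := fun q => a j i q * pd j (u s) q) ((dA i j hij).mul (dU s i)) ((dA j i hij.symm).mul (dU s j)) k,
        pd_mul (dA i j hij) (dU s i) k, pd_mul (dA j i hij.symm) (dU s j) k]
    -- differentiate the (k,j) equation in direction i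
    have e2 : pd i (pd k (pd j (u s))) p
        = pd i (a k j) p * pd k (u s) p + a k j p * pd i (pd k (u s)) p
          + (pd i (a j k) p * pd j (u s) p + a j k p * pd i (pd j (u s)) p) := by
      have hcg : pd k (pd j (u s)) =ᶠ[nhds p]
          (fun q => a k j q * pd k (u s) q + a j k q * pd j (u s) q) := by
        filter_upwards [hnhds] with q hq using heq s k j hjk.symm q hq
      rw [pd_congr hcg i,
        pd_add (a := fun q => a k j q * pd k (u s) q) (b := fun q => a j k q * pd j (u s) q) ((dA k j hjk.symm).mul (dU s k)) ((dA j k hjk).mul (dU s j)) i,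
        pd_mul (dA k j hjk.symm) (dU s k) i, pd_mul (dA j k hjk) (dU s j) i]
    have esym : pd k (pd i (pd j (u s))) p = pd i (pd k (pd j (u s))) p :=
      pd_symm hΩ (hU s j) k i hp
    -- second-order equations at p
    have eki : pd k (pd i (u s)) p = a k i p * pd k (u s) p + a i k p * pd i (u s) p :=
      heq s k i hik.symm p hp
    have ekj : pd k (pd j (u s)) p = a k j p * pd k (u s) p + a j k p * pd j (u s) p :=
      heq s k j hjk.symm p hp
    have eik : pd i (pd k (u s)) p = a i k p * pd i (u s) p + a k i p * pd k (u s) p :=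
      heq s i k hik p hp
    have eij : pd i (pd j (u s)) p = a i j p * pd i (u s) p + a j i p * pd j (u s) p :=
      heq s i j hij p hp
    rw [e1, e2, eki, ekj, eik, eij] at esym
    rw [hci, hcj, hck]
    linear_combination esym
  -- linear algebra: columns of the Jacobian are independent
  set M : Matrix (Fin n) (Fin n) ℝ := Matrix.of fun s m => pd m (u s) p with hM
  set c : Fin n → ℝ := Pi.single i ci + Pi.single j cj + Pi.single k ck with hc
  have hMc : M.mulVec c = 0 := by
    funext s
    rw [hc, Matrix.mulVec_add, Matrix.mulVec_add, Matrix.mulVec_single,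
      Matrix.mulVec_single, Matrix.mulVec_single]
    have := key s
    simp only [Pi.add_apply, Pi.zero_apply, hM, Matrix.of_apply, Pi.smul_apply, Matrix.col_apply, op_smul_eq_mul]
    linarith [key s]
  have hdet : IsUnit M.det := isUnit_iff_ne_zero.mpr (hjac p hp)
  have hc0 : c = 0 := by
    have h2 := congrArg (fun v => M⁻¹.mulVec v) hMc
    simpa [Matrix.mulVec_mulVec, Matrix.nonsing_inv_mul M hdet, Matrix.one_mulVec,
      Matrix.mulVec_zero] using h2
  have hci0 : ci = 0 := by
    have := congrFun hc0 i
    rw [hc] at this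
    simpa [Pi.single_eq_same, Pi.single_eq_of_ne hij, Pi.single_eq_of_ne hik] using this
  rw [hci] at hci0
  linarith [hci0]
end

section
/- Let n = 2 and Ω ⊆ ℝ² open. Let λ^1, λ^2, μ^1, μ^2 be smooth on Ω with λ^1 ≠ λ^2 and μ^1 ≠ μ^2 pointwise, satisfying ∂_2 μ^1/(μ^2 − μ^1) = ∂_2 λ^1/(λ^2 − λ^1) and ∂_1 μ^2/(μ^1 − μ^2) = ∂_1 λ^2/(λ^1 − λ^2). Let u^1, u^2, f^1, f^2, q^1, q^2 be smooth with ∂_i f^k = λ^i ∂_i u^k and ∂_i q^k = μ^i ∂_i u^k for i, k ∈ {1,2}. Define r : Ω → ℝ³ by r⁰ = (λ^2 μ^1 − λ^1 μ^2)/(μ^1 − μ^2), r^k = r⁰·u^k + ((λ^1 − λ^2)/(μ^1 − μ^2))·q^k − f^k for k = 1, 2. If ∂_1 r and ∂_2 r are linearly independent at every point, then the coordinate net is conjugate on the surface r(Ω): at every point, ∂_1 ∂_2 r lies in the linear span of ∂_1 r and ∂_2 r. -/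
section aux

lemma pd_congr_nhds {n : ℕ} {g h : (Fin n → ℝ) → ℝ} {p : Fin n → ℝ} (i : Fin n)
    (he : g =ᶠ[nhds p] h) : pd i g p = pd i h p := by
  simp only [pd, he.fderiv_eq]

lemma pd_diffAt {n : ℕ} {A : (Fin n → ℝ) → ℝ} {p : Fin n → ℝ}
    (h : ContDiffAt ℝ (⊤ : ℕ∞) A p) (i : Fin n) : DifferentiableAt ℝ (pd i A) p := by
  have h1 : ContDiffAt ℝ (⊤ : ℕ∞) (fderiv ℝ A) p := h.fderiv_right (by simp)
  exact (h1.differentiableAt (by simp)).clm_apply (differentiableAt_const _)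

/-- Product-rule combination used for the components of `r`. -/
lemma pd_comb {n : ℕ} (i : Fin n) (A B u q f : (Fin n → ℝ) → ℝ) (p : Fin n → ℝ)
    (hA : DifferentiableAt ℝ A p) (hB : DifferentiableAt ℝ B p)
    (hu : DifferentiableAt ℝ u p) (hq : DifferentiableAt ℝ q p)
    (hf : DifferentiableAt ℝ f p) :
    pd i (fun t => A t * u t + B t * q t - f t) p
      = (A p * pd i u p + u p * pd i A p) + (B p * pd i q p + q p * pd i B p)
        - pd i f p := by
  simp only [pd]
  rw [fderiv_fun_sub (f := fun t => A t * u t + B t * q t) ((hA.mul hu).add (hB.mul hq)) hf,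
    fderiv_fun_add (f := fun t => A t * u t) (g := fun t => B t * q t) (hA.mul hu) (hB.mul hq), fderiv_fun_mul hA hu, fderiv_fun_mul hB hq]
  simp

lemma pd_add_mul {n : ℕ} (i : Fin n) (A B u q : (Fin n → ℝ) → ℝ) (p : Fin n → ℝ)
    (hA : DifferentiableAt ℝ A p) (hB : DifferentiableAt ℝ B p)
    (hu : DifferentiableAt ℝ u p) (hq : DifferentiableAt ℝ q p) :
    pd i (fun t => A t * u t + B t * q t) p
      = (A p * pd i u p + u p * pd i A p) + (B p * pd i q p + q p * pd i B p) := by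
  simp only [pd]
  rw [fderiv_fun_add (f := fun t => A t * u t) (g := fun t => B t * q t) (hA.mul hu) (hB.mul hq), fderiv_fun_mul hA hu, fderiv_fun_mul hB hq]
  simp

lemma pd_add_const_mul {n : ℕ} (i : Fin n) (g h : (Fin n → ℝ) → ℝ) (c : ℝ) (p : Fin n → ℝ)
    (hg : DifferentiableAt ℝ g p) (hh : DifferentiableAt ℝ h p) :
    pd i (fun t => g t + c * h t) p = pd i g p + c * pd i h p := by
  simp only [pd]
  rw [fderiv_fun_add hg (hh.const_mul c), fderiv_const_mul hh c]
  simp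

end aux

/-- on the surface `r` (the envelope of the planes associated with a
commuting flow, i.e. the surface harmonic to the congruence) the coordinate net
`R¹, R²` is conjugate: `∂_1∂_2 r ∈ span{∂_1 r, ∂_2 r}`.
Indices: `0, 1 : Fin 2` stand for `1, 2` of the paper. -/
theorem stmt7 (Ω : Set (Fin 2 → ℝ)) (hΩ : IsOpen Ω)
    (lam mu : Fin 2 → (Fin 2 → ℝ) → ℝ)
    (hlam : ∀ i, ContDiffOn ℝ (⊤ : ℕ∞) (lam i) Ω)
    (hmu : ∀ i, ContDiffOn ℝ (⊤ : ℕ∞) (mu i) Ω)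
    (hlamd : ∀ p ∈ Ω, lam 0 p ≠ lam 1 p)
    (hmud : ∀ p ∈ Ω, mu 0 p ≠ mu 1 p)
    (hcomm1 : ∀ p ∈ Ω,
      pd 1 (mu 0) p / (mu 1 p - mu 0 p) = pd 1 (lam 0) p / (lam 1 p - lam 0 p))
    (hcomm2 : ∀ p ∈ Ω,
      pd 0 (mu 1) p / (mu 0 p - mu 1 p) = pd 0 (lam 1) p / (lam 0 p - lam 1 p))
    (u f q : Fin 2 → (Fin 2 → ℝ) → ℝ)
    (hu : ∀ k, ContDiffOn ℝ (⊤ : ℕ∞) (u k) Ω)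
    (hfsm : ∀ k, ContDiffOn ℝ (⊤ : ℕ∞) (f k) Ω)
    (hqsm : ∀ k, ContDiffOn ℝ (⊤ : ℕ∞) (q k) Ω)
    (hf : ∀ i k, ∀ p ∈ Ω, pd i (f k) p = lam i p * pd i (u k) p)
    (hq : ∀ i k, ∀ p ∈ Ω, pd i (q k) p = mu i p * pd i (u k) p)
    (r : (Fin 2 → ℝ) → (Fin 3 → ℝ))
    (hr : r = fun p =>
      ![(lam 1 p * mu 0 p - lam 0 p * mu 1 p) / (mu 0 p - mu 1 p),
        ((lam 1 p * mu 0 p - lam 0 p * mu 1 p) / (mu 0 p - mu 1 p)) * u 0 p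
          + ((lam 0 p - lam 1 p) / (mu 0 p - mu 1 p)) * q 0 p - f 0 p,
        ((lam 1 p * mu 0 p - lam 0 p * mu 1 p) / (mu 0 p - mu 1 p)) * u 1 p
          + ((lam 0 p - lam 1 p) / (mu 0 p - mu 1 p)) * q 1 p - f 1 p])
    (hind : ∀ p ∈ Ω, LinearIndependent ℝ ![pd 0 r p, pd 1 r p]) :
    ∀ p ∈ Ω, pd 0 (pd 1 r) p ∈ Submodule.span ℝ ({pd 0 r p, pd 1 r p} : Set (Fin 3 → ℝ)) := by
  -- scalar component functions
  set A : (Fin 2 → ℝ) → ℝ :=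
    fun s => (lam 1 s * mu 0 s - lam 0 s * mu 1 s) / (mu 0 s - mu 1 s) with hA_def
  set B : (Fin 2 → ℝ) → ℝ :=
    fun s => (lam 0 s - lam 1 s) / (mu 0 s - mu 1 s) with hB_def
  have hDne : ∀ s ∈ Ω, mu 0 s - mu 1 s ≠ 0 := fun s hs => sub_ne_zero.mpr (hmud s hs)
  -- smoothness of A, B
  have hAc : ContDiffOn ℝ (⊤ : ℕ∞) A Ω := by
    exact ContDiffOn.div (((hlam 1).mul (hmu 0)).sub ((hlam 0).mul (hmu 1)))
      ((hmu 0).sub (hmu 1)) hDne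
  have hBc : ContDiffOn ℝ (⊤ : ℕ∞) B Ω := by
    exact ContDiffOn.div ((hlam 0).sub (hlam 1)) ((hmu 0).sub (hmu 1)) hDne
  -- componentwise description of r
  set Rc : Fin 3 → (Fin 2 → ℝ) → ℝ :=
    ![A, fun s => A s * u 0 s + B s * q 0 s - f 0 s,
        fun s => A s * u 1 s + B s * q 1 s - f 1 s] with hRc_def
  have hrc : r = fun s j => Rc j s := by
    rw [hr]; funext s j
    fin_cases j <;> simp [hRc_def, hA_def, hB_def]
  have hRcC : ∀ j, ContDiffOn ℝ (⊤ : ℕ∞) (Rc j) Ω := by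
    intro j
    fin_cases j
    · exact hAc
    · exact ((hAc.mul (hu 0)).add (hBc.mul (hqsm 0))).sub (hfsm 0)
    · exact ((hAc.mul (hu 1)).add (hBc.mul (hqsm 1))).sub (hfsm 1)
  -- ContDiffAt / DifferentiableAt versions on Ω
  have hAt : ∀ (g : (Fin 2 → ℝ) → ℝ), ContDiffOn ℝ (⊤ : ℕ∞) g Ω →
      ∀ s ∈ Ω, ContDiffAt ℝ (⊤ : ℕ∞) g s :=
    fun g hg s hs => hg.contDiffAt (hΩ.mem_nhds hs)
  have hdA : ∀ s ∈ Ω, DifferentiableAt ℝ A s :=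
    fun s hs => (hAt A hAc s hs).differentiableAt (by simp)
  have hdB : ∀ s ∈ Ω, DifferentiableAt ℝ B s :=
    fun s hs => (hAt B hBc s hs).differentiableAt (by simp)
  have hdu : ∀ k, ∀ s ∈ Ω, DifferentiableAt ℝ (u k) s :=
    fun k s hs => (hAt (u k) (hu k) s hs).differentiableAt (by simp)
  have hdq : ∀ k, ∀ s ∈ Ω, DifferentiableAt ℝ (q k) s :=
    fun k s hs => (hAt (q k) (hqsm k) s hs).differentiableAt (by simp)
  have hdf : ∀ k, ∀ s ∈ Ω, DifferentiableAt ℝ (f k) s :=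
    fun k s hs => (hAt (f k) (hfsm k) s hs).differentiableAt (by simp)
  have hdRc : ∀ j, ∀ s ∈ Ω, DifferentiableAt ℝ (Rc j) s :=
    fun j s hs => (hAt (Rc j) (hRcC j) s hs).differentiableAt (by simp)
  -- algebraic identity A + B μ^i = λ^i on Ω
  have hABl : ∀ s ∈ Ω, ∀ i : Fin 2, A s + B s * mu i s = lam i s := by
    intro s hs i
    have h := hDne s hs
    fin_cases i <;> · simp only [hA_def, hB_def]; field_simp; simp only [Fin.zero_eta, Fin.mk_one]; ring
  -- first derivatives of r on Ω
  have hpdr : ∀ s ∈ Ω, ∀ i, pd i r s = fun j => pd i (Rc j) s := by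
    intro s hs i
    simp only [pd, hrc]
    rw [fderiv_pi (fun j => hdRc j s hs)]
    rfl
  -- first derivatives of the nontrivial components on Ω
  have hcomp : ∀ s ∈ Ω, ∀ i, ∀ k : Fin 2,
      pd i (fun t => A t * u k t + B t * q k t - f k t) s
        = pd i A s * u k s + pd i B s * q k s := by
    intro s hs i k
    rw [pd_comb i A B (u k) (q k) (f k) s (hdA s hs) (hdB s hs) (hdu k s hs)
      (hdq k s hs) (hdf k s hs), hq i k s hs, hf i k s hs]
    linear_combination pd i (u k) s * (hABl s hs i)
  -- pd i r s = pd i A s • V s + pd i B s • W s (componentwise form)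
  have hpdrj : ∀ s ∈ Ω, ∀ i, pd i r s
      = fun j => pd i A s * (![1, u 0 s, u 1 s] j) + pd i B s * (![0, q 0 s, q 1 s] j) := by
    intro s hs i
    rw [hpdr s hs i]
    funext j
    fin_cases j
    · show pd i A s = _; simp
    · show pd i (fun t => A t * u 0 t + B t * q 0 t - f 0 t) s = _
      rw [hcomp s hs i 0]; simp
    · show pd i (fun t => A t * u 1 t + B t * q 1 t - f 1 t) s = _
      rw [hcomp s hs i 1]; simp
  -- the key vanishing identity at points of Ω
  have hkey : ∀ p ∈ Ω, pd 1 A p + mu 0 p * pd 1 B p = 0 := by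
    intro p hp
    have h1 : pd 1 A p + mu 0 p * pd 1 B p
        = pd 1 (fun t => A t + mu 0 p * B t) p := by
      rw [pd_add_const_mul 1 A B (mu 0 p) p (hdA p hp) (hdB p hp)]
    have h2 : (fun t => A t + mu 0 p * B t)
        =ᶠ[nhds p] (fun t => lam 0 t + (mu 0 p - mu 0 t) * B t) := by
      refine Filter.eventuallyEq_of_mem (hΩ.mem_nhds hp) (fun s hs => ?_)
      show A s + mu 0 p * B s = lam 0 s + (mu 0 p - mu 0 s) * B s
      linear_combination (hABl s hs 0)
    have h3 : pd 1 (fun t => A t + mu 0 p * B t) p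
        = pd 1 (lam 0) p + (mu 0 p - mu 0 p) * pd 1 B p + B p * pd 1 (fun t => mu 0 p - mu 0 t) p := by
      rw [pd_congr_nhds 1 h2]
      simp only [pd]
      have hdl : DifferentiableAt ℝ (lam 0) p :=
        (hAt (lam 0) (hlam 0) p hp).differentiableAt (by simp)
      have hdm : DifferentiableAt ℝ (fun t => mu 0 p - mu 0 t) p :=
        (differentiableAt_const _).sub ((hAt (mu 0) (hmu 0) p hp).differentiableAt (by simp))
      rw [fderiv_fun_add (g := fun t => (mu 0 p - mu 0 t) * B t) hdl (hdm.mul (hdB p hp)), fderiv_fun_mul hdm (hdB p hp)]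
      simp [pd]
    have h4 : pd 1 (fun t => mu 0 p - mu 0 t) p = -pd 1 (mu 0) p := by
      simp only [pd, fderiv_const_sub]
      simp
    have hc := hcomm1 p hp
    have hd1 : mu 1 p - mu 0 p ≠ 0 := sub_ne_zero.mpr (Ne.symm (hmud p hp))
    have hd2 : lam 1 p - lam 0 p ≠ 0 := sub_ne_zero.mpr (Ne.symm (hlamd p hp))
    have hc' : pd 1 (mu 0) p * (lam 1 p - lam 0 p)
        = pd 1 (lam 0) p * (mu 1 p - mu 0 p) := by
      field_simp at hc; linarith [hc]
    have hd0 : mu 0 p - mu 1 p ≠ 0 := hDne p hp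
    have hBp : B p * (mu 0 p - mu 1 p) = lam 0 p - lam 1 p := by
      simp only [hB_def]
      field_simp
    have hz : pd 1 (lam 0) p - B p * pd 1 (mu 0) p = 0 := by
      have hE : (pd 1 (lam 0) p - B p * pd 1 (mu 0) p) * (mu 0 p - mu 1 p) = 0 := by
        linear_combination hc' - pd 1 (mu 0) p * hBp
      exact (mul_eq_zero.mp hE).resolve_right hd0
    rw [h1, h3, h4]
    linear_combination hz
  -- differentiability of first partials at points of Ω
  have hdpd : ∀ (g : (Fin 2 → ℝ) → ℝ), ContDiffOn ℝ (⊤ : ℕ∞) g Ω →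
      ∀ i, ∀ s ∈ Ω, DifferentiableAt ℝ (pd i g) s :=
    fun g hg i s hs => pd_diffAt (hAt g hg s hs) i
  -- now fix p and compute the second derivative
  intro p hp
  have hmem : Ω ∈ nhds p := hΩ.mem_nhds hp
  -- second derivative, componentwise
  have hsnd : pd 0 (pd 1 r) p = fun j => pd 0 (pd 1 (Rc j)) p := by
    have he : pd 1 r =ᶠ[nhds p] (fun s j => pd 1 (Rc j) s) :=
      Filter.eventuallyEq_of_mem hmem (fun s hs => hpdr s hs 1)
    show fderiv ℝ (pd 1 r) p (Pi.single 0 1) = _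
    rw [he.fderiv_eq, fderiv_pi (fun j => pd_diffAt (hAt (Rc j) (hRcC j) p hp) 1)]
    rfl
  -- each component of the second derivative
  have hsndc : ∀ k : Fin 2, pd 0 (pd 1 (fun t => A t * u k t + B t * q k t - f k t)) p
      = pd 0 (pd 1 A) p * u k p + pd 0 (pd 1 B) p * q k p := by
    intro k
    have he : pd 1 (fun t => A t * u k t + B t * q k t - f k t)
        =ᶠ[nhds p] (fun s => pd 1 A s * u k s + pd 1 B s * q k s) :=
      Filter.eventuallyEq_of_mem hmem (fun s hs => hcomp s hs 1 k)
    rw [pd_congr_nhds 0 he,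
      pd_add_mul 0 (pd 1 A) (pd 1 B) (u k) (q k) p
        (hdpd A hAc 1 p hp) (hdpd B hBc 1 p hp) (hdu k p hp) (hdq k p hp),
      hq 0 k p hp]
    linear_combination pd 0 (u k) p * (hkey p hp)
  -- assemble: second derivative lies in span of V, W
  set V : Fin 3 → ℝ := ![1, u 0 p, u 1 p] with hV_def
  set W : Fin 3 → ℝ := ![0, q 0 p, q 1 p] with hW_def
  have hsnd2 : pd 0 (pd 1 r) p
      = pd 0 (pd 1 A) p • V + pd 0 (pd 1 B) p • W := by
    rw [hsnd]
    funext j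
    fin_cases j
    · show pd 0 (pd 1 A) p = _; simp [hV_def, hW_def]
    · show pd 0 (pd 1 (fun t => A t * u 0 t + B t * q 0 t - f 0 t)) p = _
      rw [hsndc 0]; simp [hV_def, hW_def]
    · show pd 0 (pd 1 (fun t => A t * u 1 t + B t * q 1 t - f 1 t)) p = _
      rw [hsndc 1]; simp [hV_def, hW_def]
  have hfst : ∀ i, pd i r p = pd i A p • V + pd i B p • W := by
    intro i
    rw [hpdrj p hp i]
    funext j
    fin_cases j <;> simp [hV_def, hW_def]
  -- span argument
  set S : Submodule ℝ (Fin 3 → ℝ) := Submodule.span ℝ {V, W} with hS_def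
  have hmemS : ∀ i, pd i r p ∈ S := by
    intro i
    rw [hfst i]
    exact Submodule.add_mem _
      (Submodule.smul_mem _ _ (Submodule.subset_span (by simp)))
      (Submodule.smul_mem _ _ (Submodule.subset_span (by simp)))
  have hle : Submodule.span ℝ ({pd 0 r p, pd 1 r p} : Set (Fin 3 → ℝ)) ≤ S := by
    rw [Submodule.span_le]
    rintro x (rfl | rfl)
    · exact hmemS 0
    · exact hmemS 1
  have hrank : Module.finrank ℝ
      (Submodule.span ℝ ({pd 0 r p, pd 1 r p} : Set (Fin 3 → ℝ))) = 2 := by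
    have h := finrank_span_eq_card (hind p hp)
    have hrange : Set.range ![pd 0 r p, pd 1 r p] = {pd 0 r p, pd 1 r p} := by
      simp [Set.pair_comm]
    rw [hrange] at h
    simpa using h
  have hrankS : Module.finrank ℝ S ≤ 2 := by
    refine le_trans (finrank_span_le_card _) ?_
    classical
    have : ({V, W} : Set (Fin 3 → ℝ)).toFinset.card ≤ 2 := by
      rw [Set.toFinset_insert]
      refine le_trans (Finset.card_insert_le _ _) ?_
      simp
    exact this
  have heq : Submodule.span ℝ ({pd 0 r p, pd 1 r p} : Set (Fin 3 → ℝ)) = S :=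
    Submodule.eq_of_le_of_finrank_le hle (by rw [hrank]; exact hrankS)
  rw [heq, hsnd2]
  exact Submodule.add_mem _
    (Submodule.smul_mem _ _ (Submodule.subset_span (by simp)))
    (Submodule.smul_mem _ _ (Submodule.subset_span (by simp)))
end

section
/- Fix an index α. Let a_{ij} (i ≠ j) be smooth on Ω, let h be a smooth solution of ∂_i ∂_j h = a_{ij} ∂_i h + a_{ji} ∂_j h (i ≠ j) with h, ∂_α h and 1 − a_{iα} h/∂_α h (i ≠ α) nonvanishing, and let h_1,…,h_n be nonvanishing smooth functions (Lamé coefficients) with ∂_j h_i = a_{ij} h_i for all j ≠ i. Define H_α = h_α·(h/∂_α h) and H_i = h_i·(1 − a_{iα} h/∂_α h) for i ≠ α, and define A_{αi} = (1 − a_{iα} h/∂_α h)·(∂_i h/h) for i ≠ α, A_{ij} = a_{ij} + ∂_j ln(1 − a_{iα} h/∂_α h) for i ≠ α, j ≠ i. Then ∂_j H_i = A_{ij} H_i for all j ≠ i. -/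
lemma pd_mul_s12 {n : ℕ} (j : Fin n) {f g : (Fin n → ℝ) → ℝ} {p : Fin n → ℝ}
    (hf : DifferentiableAt ℝ f p) (hg : DifferentiableAt ℝ g p) :
    pd j (fun x => f x * g x) p = pd j f p * g p + f p * pd j g p := by
  unfold pd
  rw [fderiv_fun_mul hf hg]
  simp only [ContinuousLinearMap.add_apply, ContinuousLinearMap.smul_apply, smul_eq_mul]
  ring

lemma pd_inv {n : ℕ} (j : Fin n) {g : (Fin n → ℝ) → ℝ} {p : Fin n → ℝ}
    (hg : DifferentiableAt ℝ g p) (h0 : g p ≠ 0) :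
    pd j (fun x => (g x)⁻¹) p = -pd j g p / g p ^ 2 := by
  unfold pd
  have : (fun x => (g x)⁻¹) = Inv.inv ∘ g := rfl
  rw [this, fderiv_comp p (differentiableAt_inv h0) hg]
  rw [fderiv_inv' (𝕜 := ℝ) h0]
  simp only [ContinuousLinearMap.neg_apply, ContinuousLinearMap.comp_apply,
    ContinuousLinearMap.mulLeftRight_apply]
  rw [eq_div_iff (pow_ne_zero 2 h0)]
  rw [neg_mul]; congr 1
  field_simp

lemma diffAt_div {n : ℕ} {f g : (Fin n → ℝ) → ℝ} {p : Fin n → ℝ}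
    (hf : DifferentiableAt ℝ f p) (hg : DifferentiableAt ℝ g p) (h0 : g p ≠ 0) :
    DifferentiableAt ℝ (fun x => f x / g x) p := by
  simp only [div_eq_mul_inv]
  exact hf.mul (hg.inv h0)

lemma pd_div {n : ℕ} (j : Fin n) {f g : (Fin n → ℝ) → ℝ} {p : Fin n → ℝ}
    (hf : DifferentiableAt ℝ f p) (hg : DifferentiableAt ℝ g p) (h0 : g p ≠ 0) :
    pd j (fun x => f x / g x) p = (pd j f p * g p - f p * pd j g p) / g p ^ 2 := by
  simp only [div_eq_mul_inv]
  rw [pd_mul_s12 j (g := fun x => (g x)⁻¹) hf (hg.inv h0), pd_inv j hg h0]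
  field_simp
  ring

/-- the Lévy-transformed Lamé coefficients
`H_α = h_α·h/∂_α h`, `H_i = h_i·(1 − a_{iα}h/∂_α h)` satisfy `∂_j H_i = A_{ij} H_i`
for `j ≠ i`, where `A = L_α(a)` are the transformed coefficients. -/
theorem stmt12 {n : ℕ} (Ω : Set (Fin n → ℝ)) (hΩ : IsOpen Ω) (α : Fin n)
    (a : Fin n → Fin n → (Fin n → ℝ) → ℝ)
    (hasm : ∀ i j, i ≠ j → ContDiffOn ℝ (⊤ : ℕ∞) (a i j) Ω)
    (h : (Fin n → ℝ) → ℝ) (hhsm : ContDiffOn ℝ (⊤ : ℕ∞) h Ω)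
    (hheq : ∀ i j, i ≠ j → ∀ p ∈ Ω,
      pd i (pd j h) p = a i j p * pd i h p + a j i p * pd j h p)
    (hh0 : ∀ p ∈ Ω, h p ≠ 0)
    (hdh0 : ∀ p ∈ Ω, pd α h p ≠ 0)
    (hw0 : ∀ i, i ≠ α → ∀ p ∈ Ω, 1 - a i α p * h p / pd α h p ≠ 0)
    (hl : Fin n → (Fin n → ℝ) → ℝ)
    (hlsm : ∀ i, ContDiffOn ℝ (⊤ : ℕ∞) (hl i) Ω)
    (hl0 : ∀ i, ∀ p ∈ Ω, hl i p ≠ 0)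
    (hlame : ∀ i j, j ≠ i → ∀ p ∈ Ω, pd j (hl i) p = a i j p * hl i p)
    (H : Fin n → (Fin n → ℝ) → ℝ)
    (hHα : ∀ p, H α p = hl α p * (h p / pd α h p))
    (hHi : ∀ i, i ≠ α → ∀ p, H i p = hl i p * (1 - a i α p * h p / pd α h p))
    (A : Fin n → Fin n → (Fin n → ℝ) → ℝ)
    (hAα : ∀ i, i ≠ α → ∀ p,
      A α i p = (1 - a i α p * h p / pd α h p) * (pd i h p / h p))
    (hAi : ∀ i j, i ≠ α → j ≠ i → ∀ p,
      A i j p = a i j p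
        + pd j (fun x => 1 - a i α x * h x / pd α h x) p
            / (1 - a i α p * h p / pd α h p)) :
    ∀ i j, j ≠ i → ∀ p ∈ Ω, pd j (H i) p = A i j p * H i p := by
  intro i j hj p hp
  have hmem : Ω ∈ nhds p := hΩ.mem_nhds hp
  have dh : DifferentiableAt ℝ h p :=
    ((hhsm.contDiffAt hmem).differentiableAt (by simp))
  have dhl : ∀ k, DifferentiableAt ℝ (hl k) p := fun k =>
    (((hlsm k).contDiffAt hmem).differentiableAt (by simp))
  have da : ∀ k l, k ≠ l → DifferentiableAt ℝ (a k l) p := fun k l hkl =>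
    (((hasm k l hkl).contDiffAt hmem).differentiableAt (by simp))
  have dpd : DifferentiableAt ℝ (pd α h) p := by
    have h1 : ContDiffAt ℝ (⊤ : ℕ∞) h p := hhsm.contDiffAt hmem
    have h2 : ContDiffAt ℝ (⊤ : ℕ∞) (fderiv ℝ h) p := h1.fderiv_right (by simp)
    have h3 : DifferentiableAt ℝ (fderiv ℝ h) p := h2.differentiableAt (by simp)
    exact h3.clm_apply (differentiableAt_const _)
  by_cases hiα : i = α
  · subst hiα
    have hH : H i = fun x => hl i x * (h x / pd i h x) := funext hHα
    rw [hH, pd_mul_s12 j (dhl i) (diffAt_div dh dpd (hdh0 p hp)),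
      pd_div j dh dpd (hdh0 p hp), hlame i j hj p hp, hheq j i hj p hp,
      hAα j hj p]
    beta_reduce
    field_simp [hh0 p hp, hdh0 p hp]
    ring
  · have hH : H i = fun x => hl i x * (1 - a i α x * h x / pd α h x) :=
      funext (hHi i hiα)
    have dw : DifferentiableAt ℝ (fun x => 1 - a i α x * h x / pd α h x) p :=
      (differentiableAt_const 1).sub
        (diffAt_div ((da i α hiα).mul dh) dpd (hdh0 p hp))
    rw [hH, pd_mul_s12 j (dhl i) dw, hlame i j hj p hp, hAi i j hiα hj p]
    beta_reduce
    have hw := hw0 i hiα p hp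
    field_simp [hw]
end

section
/- Fix an index α. Let λ^1,…,λ^n and μ^1,…,μ^n be smooth on Ω with λ^i ≠ λ^j pointwise for i ≠ j, satisfying ∂_j μ^i/(μ^j − μ^i) = ∂_j λ^i/(λ^j − λ^i) for all i ≠ j; assume μ^α, ∂_α μ^α and μ^α − μ^i (for i ≠ α) are nonvanishing on Ω. Define Λ^α = (λ^α ∂_α μ^α − μ^α ∂_α λ^α)/∂_α μ^α and Λ^i = (λ^i μ^α − λ^α μ^i)/(μ^α − μ^i) for i ≠ α. Then for every triple of smooth functions u, f, q on Ω with ∂_i f = λ^i ∂_i u and ∂_i q = μ^i ∂_i u for all i, the adjoint Lévy transforms U = u − q/μ^α and F = f − λ^α q/μ^α satisfy ∂_i F = Λ^i ∂_i U for all i = 1,…,n. -/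
/-- the adjoint Lévy transforms `U = u − q/μ^α`, `F = f − λ^α q/μ^α`
of a conservation law `(u, f)` (with `q` the flux of `u` for the commuting flow `μ`)
satisfy `∂_i F = Λ^i ∂_i U`, where `Λ` are the adjoint-Lévy-transformed velocities (29). -/
theorem stmt14 {n : ℕ} (Ω : Set (Fin n → ℝ)) (hΩ : IsOpen Ω) (α : Fin n)
    (lam mu : Fin n → (Fin n → ℝ) → ℝ)
    (hlam : ∀ i, ContDiffOn ℝ (⊤ : ℕ∞) (lam i) Ω)
    (hmu : ∀ i, ContDiffOn ℝ (⊤ : ℕ∞) (mu i) Ω)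
    (hdist : ∀ i j, i ≠ j → ∀ p ∈ Ω, lam i p ≠ lam j p)
    (hcomm : ∀ i j, i ≠ j → ∀ p ∈ Ω,
      pd j (mu i) p / (mu j p - mu i p) = pd j (lam i) p / (lam j p - lam i p))
    (hmuα0 : ∀ p ∈ Ω, mu α p ≠ 0)
    (hdmuα0 : ∀ p ∈ Ω, pd α (mu α) p ≠ 0)
    (hmudiff : ∀ i, i ≠ α → ∀ p ∈ Ω, mu α p - mu i p ≠ 0)
    (Lam : Fin n → (Fin n → ℝ) → ℝ)
    (hLamα : ∀ p, Lam α p =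
      (lam α p * pd α (mu α) p - mu α p * pd α (lam α) p) / pd α (mu α) p)
    (hLami : ∀ i, i ≠ α → ∀ p, Lam i p =
      (lam i p * mu α p - lam α p * mu i p) / (mu α p - mu i p)) :
    ∀ u f q : (Fin n → ℝ) → ℝ,
      ContDiffOn ℝ (⊤ : ℕ∞) u Ω → ContDiffOn ℝ (⊤ : ℕ∞) f Ω →
      ContDiffOn ℝ (⊤ : ℕ∞) q Ω →
      (∀ i, ∀ p ∈ Ω, pd i f p = lam i p * pd i u p) →
      (∀ i, ∀ p ∈ Ω, pd i q p = mu i p * pd i u p) →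
      ∀ i, ∀ p ∈ Ω,
        pd i (fun x => f x - lam α x * q x / mu α x) p
          = Lam i p * pd i (fun x => u x - q x / mu α x) p := by
  intro u f q hu hf hq hfu hqu i p hp
  have hpΩ : Ω ∈ nhds p := hΩ.mem_nhds hp
  have Du : DifferentiableAt ℝ u p :=
    ((hu.contDiffAt hpΩ).differentiableAt (by simp))
  have Df : DifferentiableAt ℝ f p :=
    ((hf.contDiffAt hpΩ).differentiableAt (by simp))
  have Dq : DifferentiableAt ℝ q p :=
    ((hq.contDiffAt hpΩ).differentiableAt (by simp))
  have DL : DifferentiableAt ℝ (lam α) p :=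
    (((hlam α).contDiffAt hpΩ).differentiableAt (by simp))
  have DM : DifferentiableAt ℝ (mu α) p :=
    (((hmu α).contDiffAt hpΩ).differentiableAt (by simp))
  have hm : mu α p ≠ 0 := hmuα0 p hp
  have hinv : HasFDerivAt (fun x => (mu α x)⁻¹)
      ((-(mu α p ^ 2)⁻¹) • fderiv ℝ (mu α) p) p :=
    (hasDerivAt_inv hm).comp_hasFDerivAt p DM.hasFDerivAt
  have hU : HasFDerivAt (fun x => u x - q x / mu α x)
      (fderiv ℝ u p - (q p • ((-(mu α p ^ 2)⁻¹) • fderiv ℝ (mu α) p) +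
        (mu α p)⁻¹ • fderiv ℝ q p)) p := by
    simp only [div_eq_mul_inv]
    exact Du.hasFDerivAt.sub (Dq.hasFDerivAt.mul hinv)
  have hF : HasFDerivAt (fun x => f x - lam α x * q x / mu α x)
      (fderiv ℝ f p - ((lam α p * q p) • ((-(mu α p ^ 2)⁻¹) • fderiv ℝ (mu α) p) +
        (mu α p)⁻¹ • (lam α p • fderiv ℝ q p + q p • fderiv ℝ (lam α) p))) p := by
    simp only [div_eq_mul_inv]
    exact Df.hasFDerivAt.sub ((DL.hasFDerivAt.mul Dq.hasFDerivAt).mul hinv)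
  have pdU : pd i (fun x => u x - q x / mu α x) p
      = pd i u p - (q p * (-(mu α p ^ 2)⁻¹ * pd i (mu α) p) +
          (mu α p)⁻¹ * pd i q p) := by
    simp only [pd, hU.fderiv]
    simp
  have pdF : pd i (fun x => f x - lam α x * q x / mu α x) p
      = pd i f p - (lam α p * q p * (-(mu α p ^ 2)⁻¹ * pd i (mu α) p) +
          (mu α p)⁻¹ * (lam α p * pd i q p + q p * pd i (lam α) p)) := by
    simp only [pd, hF.fderiv]
    simp [mul_add]
  rw [pdU, pdF, hfu i p hp, hqu i p hp]
  by_cases hiα : i = α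
  · subst hiα
    rw [hLamα p]
    have hd : pd i (mu i) p ≠ 0 := hdmuα0 p hp
    field_simp
    ring
  · rw [hLami i hiα p]
    have hmd : mu α p - mu i p ≠ 0 := hmudiff i hiα p hp
    have hld : lam i p - lam α p ≠ 0 := sub_ne_zero.mpr (hdist i α hiα p hp)
    have hmd' : mu i p - mu α p ≠ 0 := fun h => hmd (by
      have := sub_eq_zero.mp h; linarith)
    have hc := hcomm α i (Ne.symm hiα) p hp
    have hLα : pd i (lam α) p
        = pd i (mu α) p * (lam i p - lam α p) / (mu i p - mu α p) := by
      field_simp at hc ⊢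
      linarith [hc]
    rw [hLα]
    field_simp
    ring
end
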